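/- arXiv:1202.0504 — 3 statements merged into one kernel-verified Lean document; each statement's English description precedes it below -/
import Mathlib

section
/- Let P ⊆ ℝⁿ be a simple polygon with finitely many vertices and let p ∈ (0, 3). Then the integral Menger curvature of P is finite: M_p(P) < ∞. -/
open MeasureTheory Real
open scoped ENNReal NNReal Classical

/-- The Menger curvature of three points in `ℝⁿ`: the reciprocal of the circumradius,
`κ(x,y,z) = 2 dist(z, L_{x,y}) / (|x-z| |y-z|)` for pairwise distinct non-collinear points,
and `0` otherwise. -/
noncomputable def menger {n : ℕ} (x y z : EuclideanSpace ℝ (Fin n)) : ℝ :=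
  if x ≠ y ∧ y ≠ z ∧ x ≠ z ∧ ¬ Collinear ℝ ({x, y, z} : Set (EuclideanSpace ℝ (Fin n)))
  then 2 * Metric.infDist z (affineSpan ℝ ({x, y} : Set (EuclideanSpace ℝ (Fin n))) :
      Set (EuclideanSpace ℝ (Fin n))) / (dist x z * dist y z)
  else 0

/-- The point `(a, b) ∈ ℝ²` (with the Euclidean metric). -/
noncomputable def pt (a b : ℝ) : EuclideanSpace ℝ (Fin 2) :=
  (WithLp.equiv 2 (Fin 2 → ℝ)).symm ![a, b]

/-- Integral Menger curvature `M_p(X)` (innermost integration in `x`). -/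
noncomputable def Mp {n : ℕ} (p : ℝ) (X : Set (EuclideanSpace ℝ (Fin n))) : ℝ≥0∞ :=
  ∫⁻ z in X, ∫⁻ y in X, ∫⁻ x in X,
    (ENNReal.ofReal (menger x y z)) ^ p ∂μH[1] ∂μH[1] ∂μH[1]

/-- Intermediate energy `I_p(X)`. -/
noncomputable def Ip {n : ℕ} (p : ℝ) (X : Set (EuclideanSpace ℝ (Fin n))) : ℝ≥0∞ :=
  ∫⁻ y in X, ∫⁻ x in X,
    (⨆ z ∈ X, ENNReal.ofReal (menger x y z)) ^ p ∂μH[1] ∂μH[1]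

/-- Global curvature energy `U_p(X)`. -/
noncomputable def Up {n : ℕ} (p : ℝ) (X : Set (EuclideanSpace ℝ (Fin n))) : ℝ≥0∞ :=
  ∫⁻ x in X, (⨆ y ∈ X, ⨆ z ∈ X, ENNReal.ofReal (menger x y z)) ^ p ∂μH[1]

/-- `P ⊆ ℝⁿ` is a simple polygon with finitely many vertices: there are `N ≥ 3` vertices
`v 0, …, v (N-1)` (consecutive ones distinct) such that `P` is the union of the closed
segments `S i = [v i, v (i+1)]`, `i = 0, …, N-2`, consecutive segments meet exactly in their
common vertex, and non-adjacent segments are disjoint. -/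
def IsSimplePolygon {n : ℕ} (P : Set (EuclideanSpace ℝ (Fin n))) : Prop :=
  ∃ (N : ℕ) (v : ℕ → EuclideanSpace ℝ (Fin n)),
    3 ≤ N ∧
    (∀ i, i + 1 < N → v i ≠ v (i + 1)) ∧
    P = ⋃ i ∈ Finset.range (N - 1), segment ℝ (v i) (v (i + 1)) ∧
    (∀ i, i + 2 < N →
      segment ℝ (v i) (v (i + 1)) ∩ segment ℝ (v (i + 1)) (v (i + 2)) = {v (i + 1)}) ∧
    (∀ i j, i + 2 ≤ j → j + 1 < N →
      segment ℝ (v i) (v (i + 1)) ∩ segment ℝ (v j) (v (j + 1)) = ∅)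

section Aux
variable {n : ℕ}




lemma menger_nonneg (x y z : EuclideanSpace ℝ (Fin n)) : 0 ≤ menger x y z := by
  unfold menger
  split
  · exact div_nonneg (mul_nonneg (by norm_num) Metric.infDist_nonneg)
      (mul_nonneg dist_nonneg dist_nonneg)
  · exact le_refl _

lemma menger_le_left {x z : EuclideanSpace ℝ (Fin n)} (y : EuclideanSpace ℝ (Fin n))
    (hxz : x ≠ z) : menger x y z ≤ 2 / dist x z := by
  have hdxz : 0 < dist x z := dist_pos.2 hxz
  unfold menger
  split
  · rename_i h
    have hdyz : 0 < dist y z := dist_pos.2 h.2.1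
    have hD : Metric.infDist z (affineSpan ℝ ({x, y} : Set (EuclideanSpace ℝ (Fin n))) :
        Set (EuclideanSpace ℝ (Fin n))) ≤ dist z y := by
      apply Metric.infDist_le_dist_of_mem
      exact subset_affineSpan ℝ _ (by simp)
    rw [div_le_div_iff₀ (by positivity) hdxz]
    calc 2 * Metric.infDist z _ * dist x z ≤ 2 * dist z y * dist x z := by
          apply mul_le_mul_of_nonneg_right (by linarith) dist_nonneg
      _ = 2 * (dist x z * dist y z) := by rw [dist_comm z y]; ring
  · positivity

lemma menger_le_right {y z : EuclideanSpace ℝ (Fin n)} (x : EuclideanSpace ℝ (Fin n))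
    (hyz : y ≠ z) : menger x y z ≤ 2 / dist y z := by
  have hdyz : 0 < dist y z := dist_pos.2 hyz
  unfold menger
  split
  · rename_i h
    have hdxz : 0 < dist x z := dist_pos.2 h.2.2.1
    have hD : Metric.infDist z (affineSpan ℝ ({x, y} : Set (EuclideanSpace ℝ (Fin n))) :
        Set (EuclideanSpace ℝ (Fin n))) ≤ dist z x := by
      apply Metric.infDist_le_dist_of_mem
      exact subset_affineSpan ℝ _ (by simp)
    rw [div_le_div_iff₀ (by positivity) hdyz]
    calc 2 * Metric.infDist z _ * dist y z ≤ 2 * dist z x * dist y z := by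
          apply mul_le_mul_of_nonneg_right (by linarith) dist_nonneg
      _ = 2 * (dist x z * dist y z) := by rw [dist_comm z x]; ring
  · positivity

lemma menger_eq_zero_of_collinear {x y z : EuclideanSpace ℝ (Fin n)}
    (h : Collinear ℝ ({x, y, z} : Set (EuclideanSpace ℝ (Fin n)))) : menger x y z = 0 := by
  unfold menger
  rw [if_neg]
  rintro ⟨-, -, -, hc⟩
  exact hc h

lemma collinear_of_mem_segment {q r x y z : EuclideanSpace ℝ (Fin n)}
    (hx : x ∈ segment ℝ q r) (hy : y ∈ segment ℝ q r) (hz : z ∈ segment ℝ q r) :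
    Collinear ℝ ({x, y, z} : Set (EuclideanSpace ℝ (Fin n))) := by
  have hseg : Collinear ℝ (segment ℝ q r) := by
    rw [segment_eq_image' ℝ q r]
    rw [collinear_iff_exists_forall_eq_smul_vadd]
    refine ⟨q, r - q, ?_⟩
    rintro p ⟨θ, -, rfl⟩
    exact ⟨θ, by simp [add_comm]⟩
  exact hseg.subset (by rintro w (rfl | rfl | rfl) <;> assumption)

lemma menger_le_of_max_ge {x y z : EuclideanSpace ℝ (Fin n)} {m : ℝ} (hm : 0 < m)
    (h : m ≤ max (dist x z) (dist y z)) : menger x y z ≤ 2 / m := by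
  rcases le_max_iff.1 h with h' | h'
  · exact (menger_le_left y (by rw [← dist_pos]; linarith)).trans
      (div_le_div_of_nonneg_left (by norm_num) hm h')
  · exact (menger_le_right x (by rw [← dist_pos]; linarith)).trans
      (div_le_div_of_nonneg_left (by norm_num) hm h')


lemma seg_param {v w x : EuclideanSpace ℝ (Fin n)} (hx : x ∈ segment ℝ v w) :
    ∃ s : ℝ, 0 ≤ s ∧ s ≤ 1 ∧ x - v = s • (w - v) ∧ dist x v = s * ‖w - v‖ := by
  rw [segment_eq_image' ℝ v w] at hx
  obtain ⟨s, hs, rfl⟩ := hx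
  refine ⟨s, hs.1, hs.2, by rw [add_sub_cancel_left], ?_⟩
  rw [dist_eq_norm, add_sub_cancel_left, norm_smul, Real.norm_eq_abs, abs_of_nonneg hs.1]

lemma cross_bound {v w₁ w₂ x z : EuclideanSpace ℝ (Fin n)} {γ : ℝ}
    (hw₁ : w₁ ≠ v) (hw₂ : w₂ ≠ v)
    (hγ : inner ℝ (w₁ - v) (w₂ - v) = γ * (‖w₁ - v‖ * ‖w₂ - v‖))
    (hx : x ∈ segment ℝ v w₁) (hz : z ∈ segment ℝ v w₂) :
    Real.sqrt (1 - max γ 0) * max (dist x v) (dist z v) ≤ dist x z := by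
  obtain ⟨s, hs0, hs1, hxe, hxd⟩ := seg_param hx
  obtain ⟨u, hu0, hu1, hze, hzd⟩ := seg_param hz
  set a := w₁ - v
  set b := w₂ - v
  have ha : (0:ℝ) < ‖a‖ := by simpa [a, sub_eq_zero] using hw₁
  have hb : (0:ℝ) < ‖b‖ := by simpa [b, sub_eq_zero] using hw₂
  have hγ1 : γ ≤ 1 := by
    have h2 := real_inner_le_norm a b
    rw [hγ] at h2
    nlinarith [mul_pos ha hb]
  set S := s * ‖a‖ with hS
  set U := u * ‖b‖ with hU
  have hS0 : 0 ≤ S := mul_nonneg hs0 ha.le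
  have hU0 : 0 ≤ U := mul_nonneg hu0 hb.le
  have hdist2 : dist x z ^ 2 = S^2 + U^2 - 2 * γ * S * U := by
    have hxz : x - z = s • a - u • b := by
      have h1 : x - z = (x - v) - (z - v) := by abel
      rw [h1, hxe, hze]
    rw [dist_eq_norm, hxz, ← real_inner_self_eq_norm_sq, inner_sub_sub_self]
    simp only [real_inner_smul_left, real_inner_smul_right]
    have hγ' : (inner ℝ b a : ℝ) = γ * (‖a‖ * ‖b‖) := by rw [real_inner_comm]; exact hγ
    simp only [hγ, hγ', real_inner_self_eq_norm_sq]
    ring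
  have key : (1 - max γ 0) * (max S U)^2 ≤ dist x z ^ 2 := by
    rw [hdist2]
    rcases le_total γ 0 with hγ0 | hγ0
    · rw [max_eq_right hγ0]
      have h20 : 0 ≤ (-2 * γ) * S * U :=
        mul_nonneg (mul_nonneg (by linarith) hS0) hU0
      rcases le_total S U with h | h
      · rw [max_eq_right h]; nlinarith [sq_nonneg S]
      · rw [max_eq_left h]; nlinarith [sq_nonneg U]
    · rw [max_eq_left hγ0]
      rcases le_total S U with h | h
      · rw [max_eq_right h]
        nlinarith [mul_nonneg hγ0 (sq_nonneg (S - U)), mul_nonneg (sub_nonneg.2 hγ1) (sq_nonneg S)]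
      · rw [max_eq_left h]
        nlinarith [mul_nonneg hγ0 (sq_nonneg (S - U)), mul_nonneg (sub_nonneg.2 hγ1) (sq_nonneg U)]
  have hmax : max (dist x v) (dist z v) = max S U := by rw [hxd, hzd]
  rw [hmax]
  have hmax1 : max γ 0 ≤ 1 := max_le hγ1 zero_le_one
  have h1 : Real.sqrt (1 - max γ 0) * max S U = Real.sqrt ((1 - max γ 0) * (max S U)^2) := by
    rw [Real.sqrt_mul (by linarith), Real.sqrt_sq (le_max_of_le_left hS0)]
  rw [h1]
  calc Real.sqrt ((1 - max γ 0) * (max S U)^2) ≤ Real.sqrt (dist x z ^ 2) :=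
        Real.sqrt_le_sqrt key
    _ = dist x z := Real.sqrt_sq dist_nonneg

lemma gamma_lt_one {v w₁ w₂ : EuclideanSpace ℝ (Fin n)}
    (hw₁ : w₁ ≠ v) (hw₂ : w₂ ≠ v)
    (hint : segment ℝ v w₁ ∩ segment ℝ v w₂ = {v}) :
    inner ℝ (w₁ - v) (w₂ - v) / (‖w₁ - v‖ * ‖w₂ - v‖) < 1 := by
  set a := w₁ - v with hadef
  set b := w₂ - v with hbdef
  have ha : (0:ℝ) < ‖a‖ := by simpa [a, sub_eq_zero] using hw₁
  have hb : (0:ℝ) < ‖b‖ := by simpa [b, sub_eq_zero] using hw₂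
  rw [div_lt_one (by positivity)]
  rcases lt_or_eq_of_le (real_inner_le_norm a b) with h | h
  · exact h
  exfalso
  have heq : ‖b‖ • a = ‖a‖ • b := inner_eq_norm_mul_iff_real.1 h
  set m := min ‖a‖ ‖b‖ with hm
  have hm0 : 0 < m := lt_min ha hb
  have hsm : (m / ‖a‖) • a = (m / ‖b‖) • b := by
    have h1 : (m / ‖a‖) • a = (m / (‖a‖ * ‖b‖)) • (‖b‖ • a) := by
      rw [smul_smul]
      congr 1
      field_simp
    rw [h1, heq, smul_smul]
    congr 1
    field_simp
  have hp1 : v + (m / ‖a‖) • a ∈ segment ℝ v w₁ := by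
    rw [segment_eq_image' ℝ v w₁]
    exact ⟨m / ‖a‖, ⟨by positivity, by rw [div_le_one ha]; exact min_le_left _ _⟩, rfl⟩
  have hp2 : v + (m / ‖a‖) • a ∈ segment ℝ v w₂ := by
    rw [segment_eq_image' ℝ v w₂]
    refine ⟨m / ‖b‖, ⟨by positivity, by rw [div_le_one hb]; exact min_le_right _ _⟩, ?_⟩
    show v + (m / ‖b‖) • b = v + (m / ‖a‖) • a
    rw [hsm]
  have hmem : v + (m / ‖a‖) • a ∈ ({v} : Set (EuclideanSpace ℝ (Fin n))) := by
    rw [← hint]; exact ⟨hp1, hp2⟩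
  rw [Set.mem_singleton_iff] at hmem
  have h0 : (m / ‖a‖) • a = 0 := by
    have h0' : v + (m / ‖a‖) • a - v = 0 := by rw [hmem]; abel
    simpa using h0'
  rw [smul_eq_zero] at h0
  rcases h0 with h' | h'
  · rw [div_eq_zero_iff] at h'
    rcases h' with h'' | h''
    · exact hm0.ne' h''
    · exact ha.ne' h''
  · exact ha.ne' (by rw [h', norm_zero])

lemma max3_helper1 {c S T U d1 d2 : ℝ} (hc : 0 < c) (hS : 0 ≤ S) (hT : 0 ≤ T) (hU : 0 ≤ U)
    (h1 : c * max S U ≤ d1) (h2 : c * max T U ≤ d2) :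
    c / 2 * max S (max T U) ≤ max d1 d2 := by
  rcases le_total S (max T U) with h | h
  · rw [max_eq_right h]
    refine le_trans ?_ (le_max_of_le_right h2)
    nlinarith [le_max_left T U, le_max_right T U]
  · rw [max_eq_left h]
    refine le_trans ?_ (le_max_of_le_left h1)
    nlinarith [le_max_left S U]

lemma max3_helper2 {c S T U d1 d2 : ℝ} (hc : 0 < c) (hc1 : c ≤ 1)
    (hS : 0 ≤ S) (hT : 0 ≤ T) (hU : 0 ≤ U)
    (h1 : |S - U| ≤ d1) (h2 : c * max T U ≤ d2) :
    c / 2 * max S (max T U) ≤ max d1 d2 := by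
  rcases le_total S (2 * U) with hSU | hSU
  · refine le_trans ?_ (le_max_of_le_right h2)
    have hm : max S (max T U) ≤ 2 * max T U := by
      apply max_le
      · exact hSU.trans (by nlinarith [le_max_right T U])
      · nlinarith [max_le_iff.1 (le_refl (max T U)), le_max_left T U, le_max_right T U,
          le_trans hT (le_max_left T U)]
    nlinarith
  · rcases le_total S (max T U) with h | h
    · rw [max_eq_right h]
      refine le_trans ?_ (le_max_of_le_right h2)
      nlinarith
    · rw [max_eq_left h]
      refine le_trans ?_ (le_max_of_le_left h1)
      rw [abs_of_nonneg (by linarith)]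
      nlinarith

lemma max3_helper2' {c S T U d1 d2 : ℝ} (hc : 0 < c) (hc1 : c ≤ 1)
    (hS : 0 ≤ S) (hT : 0 ≤ T) (hU : 0 ≤ U)
    (h1 : c * max S U ≤ d1) (h2 : |T - U| ≤ d2) :
    c / 2 * max S (max T U) ≤ max d1 d2 := by
  have := max3_helper2 hc hc1 hT hS hU h2 h1
  rw [max_comm d2 d1] at this
  refine le_trans (le_of_eq ?_) this
  rw [max_left_comm]

lemma seg_isCompact (q r : EuclideanSpace ℝ (Fin n)) : IsCompact (segment ℝ q r) := by
  rw [segment_eq_image' ℝ q r]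
  exact isCompact_Icc.image (by continuity)

lemma corner_menger {v w₁ w₂ : EuclideanSpace ℝ (Fin n)} (hw₁ : w₁ ≠ v) (hw₂ : w₂ ≠ v)
    (hint : segment ℝ v w₁ ∩ segment ℝ v w₂ = {v}) :
    ∃ K : ℝ, 0 < K ∧ ∀ x y z : EuclideanSpace ℝ (Fin n),
      (x ∈ segment ℝ v w₁ ∨ x ∈ segment ℝ v w₂) →
      (y ∈ segment ℝ v w₁ ∨ y ∈ segment ℝ v w₂) →
      (z ∈ segment ℝ v w₁ ∨ z ∈ segment ℝ v w₂) →
      menger x y z * max (dist x v) (max (dist y v) (dist z v)) ≤ K := by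
  have ha : (0:ℝ) < ‖w₁ - v‖ := by simpa [sub_eq_zero] using hw₁
  have hb : (0:ℝ) < ‖w₂ - v‖ := by simpa [sub_eq_zero] using hw₂
  set γ : ℝ := inner ℝ (w₁ - v) (w₂ - v) / (‖w₁ - v‖ * ‖w₂ - v‖) with hγdef0
  have hγdef : (inner ℝ (w₁ - v) (w₂ - v) : ℝ) = γ * (‖w₁ - v‖ * ‖w₂ - v‖) := by
    rw [hγdef0]; field_simp
  have hγdef' : (inner ℝ (w₂ - v) (w₁ - v) : ℝ) = γ * (‖w₂ - v‖ * ‖w₁ - v‖) := by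
    rw [real_inner_comm, hγdef]; ring
  have hγ1 : γ < 1 := gamma_lt_one hw₁ hw₂ hint
  set c : ℝ := Real.sqrt (1 - max γ 0) with hcdef
  have hmax01 : max γ 0 < 1 := max_lt hγ1 zero_lt_one
  have hc0 : 0 < c := Real.sqrt_pos.2 (by linarith)
  have hc1 : c ≤ 1 := by
    rw [hcdef]
    apply Real.sqrt_le_one.2
    have := le_max_right γ 0
    linarith
  refine ⟨4 / c, by positivity, fun x y z hx hy hz => ?_⟩
  set S := dist x v
  set T := dist y v
  set U := dist z v
  set M := max S (max T U) with hMdef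
  have hS : 0 ≤ S := dist_nonneg
  have hT : 0 ≤ T := dist_nonneg
  have hU : 0 ≤ U := dist_nonneg
  have hM : 0 ≤ M := le_trans hS (le_max_left _ _)
  have hmain : Collinear ℝ ({x, y, z} : Set (EuclideanSpace ℝ (Fin n))) ∨
      c / 2 * M ≤ max (dist x z) (dist y z) := by
    rcases hx with hx1 | hx2
    · rcases hy with hy1 | hy2
      · rcases hz with hz1 | hz2
        · exact Or.inl (collinear_of_mem_segment hx1 hy1 hz1)
        · exact Or.inr (max3_helper1 hc0 hS hT hU
            (cross_bound hw₁ hw₂ hγdef hx1 hz2) (cross_bound hw₁ hw₂ hγdef hy1 hz2))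
      · rcases hz with hz1 | hz2
        · exact Or.inr (max3_helper2 hc0 hc1 hS hT hU (abs_dist_sub_le x z v)
            (cross_bound hw₂ hw₁ hγdef' hy2 hz1))
        · exact Or.inr (max3_helper2' hc0 hc1 hS hT hU
            (cross_bound hw₁ hw₂ hγdef hx1 hz2) (abs_dist_sub_le y z v))
    · rcases hy with hy1 | hy2
      · rcases hz with hz1 | hz2
        · exact Or.inr (max3_helper2' hc0 hc1 hS hT hU
            (cross_bound hw₂ hw₁ hγdef' hx2 hz1) (abs_dist_sub_le y z v))
        · exact Or.inr (max3_helper2 hc0 hc1 hS hT hU (abs_dist_sub_le x z v)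
            (cross_bound hw₁ hw₂ hγdef hy1 hz2))
      · rcases hz with hz1 | hz2
        · exact Or.inr (max3_helper1 hc0 hS hT hU
            (cross_bound hw₂ hw₁ hγdef' hx2 hz1) (cross_bound hw₂ hw₁ hγdef' hy2 hz1))
        · exact Or.inl (collinear_of_mem_segment hx2 hy2 hz2)
  rcases hmain with hcol | hmet
  · rw [menger_eq_zero_of_collinear hcol, zero_mul]
    positivity
  · rcases eq_or_lt_of_le hM with hM0 | hM0
    · rw [← hM0, mul_zero]
      positivity
    · have hm2 : 0 < c / 2 * M := by positivity
      have hmb := menger_le_of_max_ge hm2 hmet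
      calc menger x y z * M ≤ 2 / (c / 2 * M) * M :=
            mul_le_mul_of_nonneg_right hmb hM
        _ = 4 / c := by field_simp; ring

lemma bdd_of_empty_inter {A B C : Set (EuclideanSpace ℝ (Fin n))}
    (hA : IsCompact A) (hB : IsCompact B) (hC : IsCompact C)
    (h : A ∩ B ∩ C = ∅) :
    ∃ Bd : ℝ, 0 ≤ Bd ∧ ∀ x ∈ A, ∀ y ∈ B, ∀ z ∈ C, menger x y z ≤ Bd := by
  rcases (A ×ˢ (B ×ˢ C)).eq_empty_or_nonempty with hne | hne
  · refine ⟨0, le_refl 0, fun x hx y hy z hz => absurd ?_ (Set.not_nonempty_iff_eq_empty.2 hne)⟩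
    exact ⟨(x, y, z), hx, hy, hz⟩
  · have hcont : Continuous (fun q : EuclideanSpace ℝ (Fin n) × EuclideanSpace ℝ (Fin n) ×
        EuclideanSpace ℝ (Fin n) => max (dist q.1 q.2.2) (dist q.2.1 q.2.2)) := by
      apply Continuous.max
      · exact continuous_fst.dist (continuous_snd.comp continuous_snd)
      · exact (continuous_fst.comp continuous_snd).dist (continuous_snd.comp continuous_snd)
    obtain ⟨q₀, hq₀K, hmin⟩ := (hA.prod (hB.prod hC)).exists_isMinOn hne hcont.continuousOn
    set δ := max (dist q₀.1 q₀.2.2) (dist q₀.2.1 q₀.2.2) with hδdef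
    have hδ0 : 0 < δ := by
      rcases lt_or_eq_of_le (le_max_iff.2 (Or.inl dist_nonneg) : (0:ℝ) ≤ δ) with h' | h'
      · exact h'
      · exfalso
        have h1 : dist q₀.1 q₀.2.2 = 0 :=
          le_antisymm (le_of_le_of_eq (le_max_left _ _) h'.symm) dist_nonneg
        have h2 : dist q₀.2.1 q₀.2.2 = 0 :=
          le_antisymm (le_of_le_of_eq (le_max_right _ _) h'.symm) dist_nonneg
        rw [dist_eq_zero] at h1 h2
        have : q₀.2.2 ∈ A ∩ B ∩ C := ⟨⟨h1 ▸ hq₀K.1, h2 ▸ hq₀K.2.1⟩, hq₀K.2.2⟩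
        rw [h] at this
        exact this
    refine ⟨2 / δ, by positivity, fun x hx y hy z hz => ?_⟩
    have hle : δ ≤ max (dist x z) (dist y z) :=
      isMinOn_iff.1 hmin (x, y, z) ⟨hx, hy, hz⟩
    exact menger_le_of_max_ge hδ0 hle

lemma oneD_integrable {e : ℝ} (he0 : 0 ≤ e) (he1 : e < 1) (t₀ c d : ℝ) :
    MeasureTheory.IntegrableOn (fun t : ℝ => |t - t₀| ^ (-e)) (Set.Icc c d) volume := by
  set R : ℝ := |c| + |d| + |t₀| + 1 with hR
  have hR0 : 0 < R := by positivity
  have hsub : Set.Icc c d ⊆ Set.Icc (t₀ - R) t₀ ∪ Set.Icc t₀ (t₀ + R) := by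
    rw [Set.Icc_union_Icc_eq_Icc (by cases abs_cases c <;> cases abs_cases t₀ <;> linarith)
      (by linarith)]
    intro t ht
    rcases ht with ⟨h1, h2⟩
    constructor
    · cases abs_cases c <;> cases abs_cases t₀ <;> cases abs_cases d <;> linarith
    · cases abs_cases c <;> cases abs_cases t₀ <;> cases abs_cases d <;> linarith
  refine IntegrableOn.mono_set (IntegrableOn.union ?_ ?_) hsub
  · -- on Icc (t₀ - R) t₀ : |t - t₀| = t₀ - t
    have hii : IntervalIntegrable (fun x : ℝ => (t₀ - x) ^ (-e)) volume (t₀ - 0) (t₀ - R) :=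
      (intervalIntegral.intervalIntegrable_rpow' (by linarith)).comp_sub_left t₀
    rw [intervalIntegrable_iff, Set.uIoc_comm,
      Set.uIoc_of_le (by linarith : t₀ - R ≤ t₀ - 0)] at hii
    have hIoc : MeasureTheory.IntegrableOn (fun x : ℝ => (t₀ - x) ^ (-e))
        (Set.Ioc (t₀ - R) t₀) volume := by
      simpa using hii
    rw [integrableOn_Icc_iff_integrableOn_Ioc]
    apply hIoc.congr_fun ?_ measurableSet_Ioc
    intro t ht
    show (t₀ - t) ^ (-e) = |t - t₀| ^ (-e)
    rw [abs_of_nonpos (by linarith [ht.2] : t - t₀ ≤ 0), neg_sub]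
  · have hii : IntervalIntegrable (fun x : ℝ => (x - t₀) ^ (-e)) volume (0 + t₀) (R + t₀) :=
      (intervalIntegral.intervalIntegrable_rpow' (by linarith)).comp_sub_right t₀
    rw [intervalIntegrable_iff,
      Set.uIoc_of_le (by linarith : (0:ℝ) + t₀ ≤ R + t₀)] at hii
    have hIoc : MeasureTheory.IntegrableOn (fun x : ℝ => (x - t₀) ^ (-e))
        (Set.Ioc t₀ (t₀ + R)) volume := by
      simpa [zero_add, add_comm] using hii
    rw [integrableOn_Icc_iff_integrableOn_Ioc]
    apply hIoc.congr_fun ?_ measurableSet_Ioc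
    intro t ht
    show (t - t₀) ^ (-e) = |t - t₀| ^ (-e)
    rw [abs_of_nonneg (by linarith [ht.1.le] : (0:ℝ) ≤ t - t₀)]

lemma oneD_lintegral_lt_top {e : ℝ} (he0 : 0 ≤ e) (he1 : e < 1) (t₀ c d : ℝ) :
    ∫⁻ t in Set.Icc c d, (ENNReal.ofReal |t - t₀|) ^ (-e) ∂volume < ⊤ := by
  have haeq : ∀ᵐ t ∂(volume.restrict (Set.Icc c d)),
      (ENNReal.ofReal |t - t₀|) ^ (-e) = ENNReal.ofReal (|t - t₀| ^ (-e)) := by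
    have h01 : ∀ᵐ t ∂(volume.restrict (Set.Icc c d)), t ≠ t₀ :=
      ae_restrict_of_ae (compl_mem_ae_iff.2 (measure_singleton t₀))
    filter_upwards [h01] with t ht
    exact ENNReal.ofReal_rpow_of_pos (abs_pos.2 (sub_ne_zero.2 ht))
  rw [lintegral_congr_ae haeq]
  exact (oneD_integrable he0 he1 t₀ c d).lintegral_lt_top

lemma segment_lintegral_lt_top {e : ℝ} (he0 : 0 ≤ e) (he1 : e < 1)
    (q r u : EuclideanSpace ℝ (Fin n)) :
    ∫⁻ w in segment ℝ q r, (ENNReal.ofReal (dist w u)) ^ (-e) ∂μH[1] < ⊤ := by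
  haveI : NullSingletonClass (μH[1] : Measure (EuclideanSpace ℝ (Fin n))) :=
    Measure.noAtoms_hausdorff _ one_pos
  rcases eq_or_ne q r with rfl | hqr
  · rw [segment_same, setLIntegral_measure_zero _ _ (measure_singleton q)]
    exact ENNReal.zero_lt_top
  · have hd0 : (0:ℝ) < ‖r - q‖ := by simpa [sub_eq_zero] using (Ne.symm hqr)
    set dir : EuclideanSpace ℝ (Fin n) := ‖r - q‖⁻¹ • (r - q) with hdirdef
    have hdir : ‖dir‖ = 1 := by
      rw [hdirdef, norm_smul, norm_inv, norm_norm, inv_mul_cancel₀ hd0.ne']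
    set ψ : ℝ → EuclideanSpace ℝ (Fin n) := fun t => q + t • dir with hψdef
    have hiso : Isometry ψ := by
      apply Isometry.of_dist_eq
      intro t s
      rw [hψdef]
      simp only
      rw [dist_eq_norm, show q + t • dir - (q + s • dir) = (t - s) • dir by module,
        norm_smul, hdir, mul_one, Real.dist_eq, Real.norm_eq_abs]
    have himg : segment ℝ q r = ψ '' Set.Icc 0 ‖r - q‖ := by
      rw [segment_eq_image' ℝ q r]
      ext w
      constructor
      · rintro ⟨θ, hθ, rfl⟩
        refine ⟨θ * ‖r - q‖, ⟨mul_nonneg hθ.1 hd0.le, ?_⟩, ?_⟩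
        · nlinarith [hθ.1, hθ.2]
        · show q + (θ * ‖r - q‖) • dir = q + θ • (r - q)
          rw [hdirdef, smul_smul, mul_assoc, mul_inv_cancel₀ hd0.ne', mul_one]
      · rintro ⟨t, ht, rfl⟩
        refine ⟨t / ‖r - q‖, ⟨div_nonneg ht.1 hd0.le, by rw [div_le_one hd0]; exact ht.2⟩, ?_⟩
        show q + (t / ‖r - q‖) • (r - q) = q + t • dir
        rw [hdirdef, smul_smul, div_eq_mul_inv]
    have hemb : MeasurableEmbedding ψ := hiso.isClosedEmbedding.measurableEmbedding
    have hrestr : (μH[1] : Measure (EuclideanSpace ℝ (Fin n))).restrict (ψ '' Set.Icc 0 ‖r - q‖)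
        = Measure.map ψ ((volume : Measure ℝ).restrict (Set.Icc 0 ‖r - q‖)) := by
      ext B hB
      rw [Measure.restrict_apply hB, Measure.map_apply hemb.measurable hB,
        Measure.restrict_apply (hemb.measurable hB),
        show B ∩ ψ '' Set.Icc 0 ‖r - q‖ = ψ '' (ψ ⁻¹' B ∩ Set.Icc 0 ‖r - q‖) from
          (Set.image_preimage_inter ψ _ B).symm,
        hiso.hausdorffMeasure_image (Or.inl zero_le_one),
        MeasureTheory.hausdorffMeasure_real]
    rw [himg, hrestr, hemb.lintegral_map]
    set t₀ : ℝ := inner ℝ (u - q) dir with ht₀def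
    have hproj : ∀ t : ℝ, |t - t₀| ≤ dist (ψ t) u := by
      intro t
      have h1 : (inner ℝ (ψ t - u) dir : ℝ) = t - t₀ := by
        have h2 : ψ t - u = t • dir - (u - q) := by rw [hψdef]; simp only; abel
        rw [h2, inner_sub_left, real_inner_smul_left, real_inner_self_eq_norm_sq, hdir,
          ht₀def]
        ring
      calc |t - t₀| = |(inner ℝ (ψ t - u) dir : ℝ)| := by rw [h1]
        _ ≤ ‖ψ t - u‖ * ‖dir‖ := abs_real_inner_le_norm _ _
        _ = dist (ψ t) u := by rw [hdir, mul_one, dist_eq_norm]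
    calc ∫⁻ t in Set.Icc 0 ‖r - q‖, (ENNReal.ofReal (dist (ψ t) u)) ^ (-e) ∂volume
        ≤ ∫⁻ t in Set.Icc 0 ‖r - q‖, (ENNReal.ofReal |t - t₀|) ^ (-e) ∂volume := by
          apply lintegral_mono
          intro t
          dsimp only
          rw [ENNReal.rpow_neg, ENNReal.rpow_neg]
          exact ENNReal.inv_le_inv.2
            (ENNReal.rpow_le_rpow (ENNReal.ofReal_le_ofReal (hproj t)) he0)
      _ < ⊤ := oneD_lintegral_lt_top he0 he1 t₀ 0 ‖r - q‖

lemma menger_eq_zero_of_eq {x y z : EuclideanSpace ℝ (Fin n)} (h : x = y) :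
    menger x y z = 0 := by
  unfold menger
  rw [if_neg]
  rintro ⟨h1, -⟩
  exact h1 h

lemma rpow_neg_ofReal_anti {e A B : ℝ} (he : 0 ≤ e) (h : A ≤ B) :
    ENNReal.ofReal B ^ (-e) ≤ ENNReal.ofReal A ^ (-e) := by
  rw [ENNReal.rpow_neg, ENNReal.rpow_neg]
  exact ENNReal.inv_le_inv.2 (ENNReal.rpow_le_rpow (ENNReal.ofReal_le_ofReal h) he)

end Aux

/-- Every simple polygon has finite integral Menger curvature for `p ∈ (0,3)`. -/
theorem Mp_lt_top_of_isSimplePolygon {n : ℕ} (P : Set (EuclideanSpace ℝ (Fin n)))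
    (hP : IsSimplePolygon P) (p : ℝ) (hp : p ∈ Set.Ioo (0:ℝ) 3) :
    Mp p P < ⊤ := by
  classical
  obtain ⟨N, v, hN3, hvne, hPeq, hadj, hdisj⟩ := hP
  obtain ⟨hp0, hp3⟩ := hp
  have he0 : (0:ℝ) ≤ p / 3 := by linarith
  have he1 : p / 3 < 1 := by linarith
  set Seg : ℕ → Set (EuclideanSpace ℝ (Fin n)) := fun i => segment ℝ (v i) (v (i+1))
    with hSegdef
  have hPm : MeasurableSet P := by
    rw [hPeq]
    exact (Finset.range (N-1)).measurableSet_biUnion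
      (fun i _ => (seg_isCompact (v i) (v (i+1))).isClosed.measurableSet)
  have hμP : (μH[1] : Measure (EuclideanSpace ℝ (Fin n))) P < ⊤ := by
    rw [hPeq]
    refine lt_of_le_of_lt (measure_biUnion_finset_le _ _) ?_
    rw [ENNReal.sum_lt_top]
    intro i _
    exact lt_of_eq_of_lt (hausdorffMeasure_segment (v i) (v (i+1))) (edist_lt_top _ _)
  -- corner constants
  have hcorner : ∀ i : ℕ, ∃ K : ℝ, 0 < K ∧ (i + 2 < N → ∀ x y z : EuclideanSpace ℝ (Fin n),
      (x ∈ Seg i ∨ x ∈ Seg (i+1)) → (y ∈ Seg i ∨ y ∈ Seg (i+1)) →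
      (z ∈ Seg i ∨ z ∈ Seg (i+1)) →
      menger x y z *
        max (dist x (v (i+1))) (max (dist y (v (i+1))) (dist z (v (i+1)))) ≤ K) := by
    intro i
    by_cases hi : i + 2 < N
    · have hw₁ : v i ≠ v (i+1) := hvne i (by omega)
      have hw₂ : v (i+2) ≠ v (i+1) := (hvne (i+1) (by omega)).symm
      have hint : segment ℝ (v (i+1)) (v i) ∩ segment ℝ (v (i+1)) (v (i+2)) = {v (i+1)} := by
        rw [segment_symm]
        exact hadj i hi
      obtain ⟨K, hK0, hKb⟩ := corner_menger hw₁ hw₂ hint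
      have htr : ∀ w : EuclideanSpace ℝ (Fin n), (w ∈ Seg i ∨ w ∈ Seg (i+1)) →
          (w ∈ segment ℝ (v (i+1)) (v i) ∨ w ∈ segment ℝ (v (i+1)) (v (i+2))) := by
        intro w hw
        rcases hw with h | h
        · left; rw [segment_symm]; exact h
        · right; exact h
      exact ⟨K, hK0, fun _ x y z hx hy hz => hKb x y z (htr x hx) (htr y hy) (htr z hz)⟩
    · exact ⟨1, one_pos, fun h => absurd h hi⟩
  choose K hK0 hKb using hcorner
  -- bounded constants
  have hbddall : ∀ t : ℕ × ℕ × ℕ, ∃ Bd : ℝ, 0 ≤ Bd ∧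
      (Seg t.1 ∩ Seg t.2.1 ∩ Seg t.2.2 = ∅ →
        ∀ x ∈ Seg t.1, ∀ y ∈ Seg t.2.1, ∀ z ∈ Seg t.2.2, menger x y z ≤ Bd) := by
    intro t
    by_cases h : Seg t.1 ∩ Seg t.2.1 ∩ Seg t.2.2 = ∅
    · obtain ⟨Bd, h0, hB⟩ := bdd_of_empty_inter (seg_isCompact _ _) (seg_isCompact _ _)
        (seg_isCompact _ _) h
      exact ⟨Bd, h0, fun _ => hB⟩
    · exact ⟨0, le_rfl, fun h' => absurd h' h⟩
  choose Bd hBd0 hBdP using hbddall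
  set TF : Finset (ℕ × ℕ × ℕ) :=
    Finset.range (N-1) ×ˢ Finset.range (N-1) ×ˢ Finset.range (N-1) with hTF
  set Btot : ℝ := ∑ t ∈ TF, Bd t with hBtotdef
  have hBtotle : ∀ t ∈ TF, Bd t ≤ Btot :=
    fun t ht => Finset.single_le_sum (fun s _ => hBd0 s) ht
  -- pairwise adjacency
  have hpair : ∀ i j : ℕ, i < N - 1 → j < N - 1 → (Seg i ∩ Seg j).Nonempty →
      i ≤ j + 1 ∧ j ≤ i + 1 := by
    intro i j hi hj hne
    obtain ⟨w, hw⟩ := hne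
    constructor
    · by_contra h
      push_neg at h
      have hd := hdisj j i (by omega) (by omega)
      rw [Set.eq_empty_iff_forall_notMem] at hd
      exact hd w ⟨hw.2, hw.1⟩
    · by_contra h
      push_neg at h
      have hd := hdisj i j (by omega) (by omega)
      rw [Set.eq_empty_iff_forall_notMem] at hd
      exact hd w hw
  -- classification of triples
  have hclass : ∀ a b c : ℕ, a < N - 1 → b < N - 1 → c < N - 1 →
      (∃ i, i + 2 < N ∧ (a = i ∨ a = i + 1) ∧ (b = i ∨ b = i + 1) ∧ (c = i ∨ c = i + 1)) ∨
      Seg a ∩ Seg b ∩ Seg c = ∅ := by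
    intro a b c ha hb hc
    by_cases hne : Seg a ∩ Seg b ∩ Seg c = ∅
    · exact Or.inr hne
    left
    obtain ⟨w, hw⟩ := Set.nonempty_iff_ne_empty.2 hne
    have hab := hpair a b ha hb ⟨w, hw.1.1, hw.1.2⟩
    have hac := hpair a c ha hc ⟨w, hw.1.1, hw.2⟩
    have hbc := hpair b c hb hc ⟨w, hw.1.2, hw.2⟩
    by_cases hm : min a (min b c) + 2 < N
    · exact ⟨min a (min b c), hm, by omega, by omega, by omega⟩
    · exact ⟨N - 3, by omega, by omega, by omega, by omega⟩
  -- ENNReal setup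
  set G : ℕ → EuclideanSpace ℝ (Fin n) → ℝ≥0∞ :=
    fun i w => ENNReal.ofReal (dist w (v (i+1))) ^ (-(p/3)) with hGdef
  have hGmeas : ∀ i, Measurable (G i) := fun i =>
    (ENNReal.continuous_rpow_const.comp
      (ENNReal.continuous_ofReal.comp (continuous_id.dist continuous_const))).measurable
  set cE : ℕ → ℝ≥0∞ := fun i => ENNReal.ofReal (K i) ^ p with hcEdef
  set C0 : ℝ≥0∞ := ENNReal.ofReal Btot ^ p with hC0def
  -- pointwise bound
  have hpoint : ∀ x ∈ P, ∀ y ∈ P, ∀ z ∈ P,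
      ENNReal.ofReal (menger x y z) ^ p ≤
        C0 + ∑ i ∈ Finset.range (N - 2), cE i * (G i y * G i z) * G i x := by
    intro x hx y hy z hz
    rw [hPeq] at hx hy hz
    simp only [Set.mem_iUnion, Finset.mem_range] at hx hy hz
    obtain ⟨a, ha, hxa⟩ := hx
    obtain ⟨b, hb, hyb⟩ := hy
    obtain ⟨cc, hcc, hzc⟩ := hz
    rcases hclass a b cc ha hb hcc with ⟨i, hiN, hai, hbi, hci⟩ | hemp
    · -- corner case
      have hxm : x ∈ Seg i ∨ x ∈ Seg (i+1) := by
        rcases hai with rfl | rfl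
        exacts [Or.inl hxa, Or.inr hxa]
      have hym : y ∈ Seg i ∨ y ∈ Seg (i+1) := by
        rcases hbi with rfl | rfl
        exacts [Or.inl hyb, Or.inr hyb]
      have hzm : z ∈ Seg i ∨ z ∈ Seg (i+1) := by
        rcases hci with rfl | rfl
        exacts [Or.inl hzc, Or.inr hzc]
      have hKi := hKb i hiN x y z hxm hym hzm
      set M : ℝ := max (dist x (v (i+1))) (max (dist y (v (i+1))) (dist z (v (i+1)))) with hMdef
      have hM0 : 0 ≤ M := le_trans dist_nonneg (le_max_left _ _)
      rcases eq_or_lt_of_le hM0 with hMz | hMpos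
      · have hxv : dist x (v (i+1)) = 0 :=
          le_antisymm (le_of_le_of_eq (le_max_left _ _) hMz.symm) dist_nonneg
        have hyv : dist y (v (i+1)) = 0 :=
          le_antisymm (le_of_le_of_eq ((le_max_left _ _).trans (le_max_right _ _)) hMz.symm)
            dist_nonneg
        rw [dist_eq_zero] at hxv hyv
        rw [menger_eq_zero_of_eq (hxv.trans hyv.symm), ENNReal.ofReal_zero,
          ENNReal.zero_rpow_of_pos hp0]
        exact zero_le
      · have hκ : menger x y z ≤ K i / M := (le_div_iff₀ hMpos).2 hKi
        have hMne : ENNReal.ofReal M ≠ 0 := (ENNReal.ofReal_pos.2 hMpos).ne'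
        have hMnt : ENNReal.ofReal M ≠ ⊤ := ENNReal.ofReal_ne_top
        have hdx : dist x (v (i+1)) ≤ M := le_max_left _ _
        have hdy : dist y (v (i+1)) ≤ M := (le_max_left _ _).trans (le_max_right _ _)
        have hdz : dist z (v (i+1)) ≤ M := (le_max_right _ _).trans (le_max_right _ _)
        have hstep : ENNReal.ofReal (menger x y z) ^ p ≤ cE i * (G i y * G i z) * G i x := by
          calc ENNReal.ofReal (menger x y z) ^ p
              ≤ ENNReal.ofReal (K i / M) ^ p :=
                ENNReal.rpow_le_rpow (ENNReal.ofReal_le_ofReal hκ) hp0.le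
            _ = (ENNReal.ofReal (K i) / ENNReal.ofReal M) ^ p := by
                rw [ENNReal.ofReal_div_of_pos hMpos]
            _ = ENNReal.ofReal (K i) ^ p / ENNReal.ofReal M ^ p :=
                ENNReal.div_rpow_of_nonneg _ _ hp0.le
            _ = ENNReal.ofReal (K i) ^ p * (ENNReal.ofReal M ^ (-(p/3)) *
                (ENNReal.ofReal M ^ (-(p/3)) * ENNReal.ofReal M ^ (-(p/3)))) := by
                rw [div_eq_mul_inv, ← ENNReal.rpow_neg]
                congr 1
                rw [← ENNReal.rpow_add _ _ hMne hMnt, ← ENNReal.rpow_add _ _ hMne hMnt]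
                congr 1
                ring
            _ ≤ ENNReal.ofReal (K i) ^ p * (G i y * (G i z * G i x)) := by
                refine mul_le_mul' le_rfl (mul_le_mul' ?_ (mul_le_mul' ?_ ?_))
                · exact rpow_neg_ofReal_anti he0 hdy
                · exact rpow_neg_ofReal_anti he0 hdz
                · exact rpow_neg_ofReal_anti he0 hdx
            _ = cE i * (G i y * G i z) * G i x := by rw [hcEdef]; ring
        refine hstep.trans (le_trans ?_ (self_le_add_left _ C0))
        exact Finset.single_le_sum (f := fun j => cE j * (G j y * G j z) * G j x)
          (fun _ _ => zero_le) (Finset.mem_range.2 (by omega))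
    · -- bounded case
      have hb2 : menger x y z ≤ Btot :=
        (hBdP (a, b, cc) hemp x hxa y hyb z hzc).trans
          (hBtotle (a, b, cc) (by
            rw [hTF]
            simp only [Finset.mem_product, Finset.mem_range]
            exact ⟨ha, hb, hcc⟩))
      calc ENNReal.ofReal (menger x y z) ^ p
          ≤ C0 := ENNReal.rpow_le_rpow (ENNReal.ofReal_le_ofReal hb2) hp0.le
        _ ≤ _ := self_le_add_right _ _
  -- integrals of G over P
  set IG : ℕ → ℝ≥0∞ := fun i => ∫⁻ w in P, G i w ∂μH[1] with hIGdef
  have hIGfin : ∀ i, IG i < ⊤ := by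
    intro i
    have hres : (μH[1] : Measure (EuclideanSpace ℝ (Fin n))).restrict P ≤
        Measure.sum (fun j : {k // k ∈ Finset.range (N-1)} =>
          (μH[1] : Measure (EuclideanSpace ℝ (Fin n))).restrict (Seg j.1)) := by
      rw [hPeq, ← Set.iUnion_subtype (fun k => k ∈ Finset.range (N-1)) (fun j => Seg j.1)]
      exact Measure.restrict_iUnion_le
    calc IG i ≤ ∫⁻ w, G i w ∂(Measure.sum (fun j : {k // k ∈ Finset.range (N-1)} =>
            (μH[1] : Measure (EuclideanSpace ℝ (Fin n))).restrict (Seg j.1))) :=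
          lintegral_mono' hres le_rfl
      _ = ∑' j : {k // k ∈ Finset.range (N-1)}, ∫⁻ w in Seg j.1, G i w ∂μH[1] :=
          lintegral_sum_measure _ _
      _ < ⊤ := by
          rw [tsum_fintype, ENNReal.sum_lt_top]
          intro j _
          exact segment_lintegral_lt_top he0 he1 (v j.1) (v (j.1+1)) (v (i+1))
  -- evaluation of integrals
  have heval : ∀ (A : ℝ≥0∞) (D : ℕ → ℝ≥0∞),
      ∫⁻ w in P, (A + ∑ i ∈ Finset.range (N-2), D i * G i w) ∂μH[1]
        = A * (μH[1] : Measure (EuclideanSpace ℝ (Fin n))) P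
          + ∑ i ∈ Finset.range (N-2), D i * IG i := by
    intro A D
    rw [lintegral_add_left measurable_const, setLIntegral_const,
      lintegral_finset_sum _ (fun i _ => ((hGmeas i).const_mul (D i)))]
    congr 1
    exact Finset.sum_congr rfl fun i _ => lintegral_const_mul (D i) (hGmeas i)
  -- main chain
  have h1 : Mp p P ≤ ∫⁻ z in P, ∫⁻ y in P, ∫⁻ x in P,
      (C0 + ∑ i ∈ Finset.range (N - 2), cE i * (G i y * G i z) * G i x) ∂μH[1] ∂μH[1] ∂μH[1] := by
    rw [Mp]
    apply lintegral_mono_ae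
    filter_upwards [ae_restrict_mem hPm] with z hz
    apply lintegral_mono_ae
    filter_upwards [ae_restrict_mem hPm] with y hy
    apply lintegral_mono_ae
    filter_upwards [ae_restrict_mem hPm] with x hx
    exact hpoint x hx y hy z hz
  have hx1 : ∀ y z : EuclideanSpace ℝ (Fin n),
      ∫⁻ x in P, (C0 + ∑ i ∈ Finset.range (N - 2), cE i * (G i y * G i z) * G i x) ∂μH[1]
        = C0 * (μH[1] : Measure (EuclideanSpace ℝ (Fin n))) P
          + ∑ i ∈ Finset.range (N - 2), (cE i * (IG i * G i z)) * G i y := by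
    intro y z
    rw [heval C0 (fun i => cE i * (G i y * G i z))]
    congr 1
    exact Finset.sum_congr rfl fun i _ => by ring
  have hy1 : ∀ z : EuclideanSpace ℝ (Fin n),
      ∫⁻ y in P, (C0 * (μH[1] : Measure (EuclideanSpace ℝ (Fin n))) P
          + ∑ i ∈ Finset.range (N - 2), (cE i * (IG i * G i z)) * G i y) ∂μH[1]
        = C0 * (μH[1] : Measure (EuclideanSpace ℝ (Fin n))) P
            * (μH[1] : Measure (EuclideanSpace ℝ (Fin n))) P
          + ∑ i ∈ Finset.range (N - 2), (cE i * (IG i * IG i)) * G i z := by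
    intro z
    rw [heval _ (fun i => cE i * (IG i * G i z))]
    congr 1
    exact Finset.sum_congr rfl fun i _ => by ring
  have h2 : ∫⁻ z in P, ∫⁻ y in P, ∫⁻ x in P,
      (C0 + ∑ i ∈ Finset.range (N - 2), cE i * (G i y * G i z) * G i x) ∂μH[1] ∂μH[1] ∂μH[1]
        = C0 * (μH[1] : Measure (EuclideanSpace ℝ (Fin n))) P
            * (μH[1] : Measure (EuclideanSpace ℝ (Fin n))) P
            * (μH[1] : Measure (EuclideanSpace ℝ (Fin n))) P
          + ∑ i ∈ Finset.range (N - 2), (cE i * (IG i * IG i)) * IG i := by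
    calc ∫⁻ z in P, ∫⁻ y in P, ∫⁻ x in P,
        (C0 + ∑ i ∈ Finset.range (N - 2), cE i * (G i y * G i z) * G i x) ∂μH[1] ∂μH[1] ∂μH[1]
        = ∫⁻ z in P, (C0 * (μH[1] : Measure (EuclideanSpace ℝ (Fin n))) P
            * (μH[1] : Measure (EuclideanSpace ℝ (Fin n))) P
          + ∑ i ∈ Finset.range (N - 2), (cE i * (IG i * IG i)) * G i z) ∂μH[1] := by
          refine lintegral_congr fun z => ?_
          rw [← hy1 z]
          refine lintegral_congr fun y => ?_
          exact hx1 y z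
      _ = _ := by
          rw [heval _ (fun i => cE i * (IG i * IG i))]
  have hC0fin : C0 < ⊤ := ENNReal.rpow_lt_top_of_nonneg hp0.le ENNReal.ofReal_ne_top
  have hcEfin : ∀ i, cE i < ⊤ := fun i =>
    ENNReal.rpow_lt_top_of_nonneg hp0.le ENNReal.ofReal_ne_top
  refine lt_of_le_of_lt (h1.trans (le_of_eq h2)) ?_
  apply ENNReal.add_lt_top.2
  constructor
  · exact ENNReal.mul_lt_top (ENNReal.mul_lt_top (ENNReal.mul_lt_top hC0fin hμP) hμP) hμP
  · rw [ENNReal.sum_lt_top]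
    intro i _
    exact ENNReal.mul_lt_top
      (ENNReal.mul_lt_top (hcEfin i) (ENNReal.mul_lt_top (hIGfin i) (hIGfin i))) (hIGfin i)
end

section
/- Let P ⊆ ℝⁿ be a simple polygon with finitely many vertices and let p ∈ (0, 1). Then the global curvature energy of P is finite: U_p(P) < ∞. -/
open MeasureTheory Real
open scoped ENNReal NNReal Classical

section auxlemmas
open Set

lemma quad_aux {F : Type*} [NormedAddCommGroup F] [InnerProductSpace ℝ F] (A B : F)
    (hB : ∀ r : ℝ, B ≠ r • A) :
    ∃ c : ℝ, 0 < c ∧ ∀ s t : ℝ, c * ‖s • A‖ ≤ ‖s • A - t • B‖ := by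
  by_cases hA : A = 0
  · refine ⟨1, one_pos, fun s t => ?_⟩
    simp [hA]
  · have ha : 0 < ‖A‖ := norm_pos_iff.2 hA
    have hb : 0 < ‖B‖ := norm_pos_iff.2 (by intro h; exact hB 0 (by simp [h]))
    set γ : ℝ := inner ℝ A B with hγ
    have h1 : γ < ‖A‖ * ‖B‖ := by
      rw [inner_lt_norm_mul_iff_real]
      intro h
      exact hB (‖A‖⁻¹ * ‖B‖) (by
        rw [mul_smul, h, smul_smul, inv_mul_cancel₀ ha.ne', one_smul])
    have h2 : -γ < ‖A‖ * ‖B‖ := by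
      have := inner_lt_norm_mul_iff_real (x := -A) (y := B)
      rw [inner_neg_left, norm_neg] at this
      rw [this]
      intro h
      refine hB (-(‖A‖⁻¹ * ‖B‖)) ?_
      rw [smul_neg] at h
      rw [neg_smul, mul_smul, ← neg_neg (‖B‖ • A), h, smul_neg, neg_neg, smul_smul,
        inv_mul_cancel₀ ha.ne', one_smul]
    have hγ2 : γ ^ 2 < (‖A‖ * ‖B‖) ^ 2 := by
      have habs : |γ| < ‖A‖ * ‖B‖ := abs_lt.2 ⟨by linarith, h1⟩
      calc γ ^ 2 = |γ| ^ 2 := (sq_abs γ).symm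
        _ < (‖A‖ * ‖B‖) ^ 2 := by
            apply sq_lt_sq' _ habs
            nlinarith [abs_nonneg γ]
    set c2 : ℝ := 1 - γ ^ 2 / (‖A‖ * ‖B‖) ^ 2 with hc2
    have hc2pos : 0 < c2 := by
      have : γ ^ 2 / (‖A‖ * ‖B‖) ^ 2 < 1 := by
        rw [div_lt_one (by positivity)]
        exact hγ2
      simp only [hc2]
      linarith
    refine ⟨Real.sqrt c2, Real.sqrt_pos.2 hc2pos, fun s t => ?_⟩
    have key : c2 * ‖s • A‖ ^ 2 ≤ ‖s • A - t • B‖ ^ 2 := by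
      have hexp : ‖s • A - t • B‖ ^ 2
          = s ^ 2 * ‖A‖ ^ 2 - 2 * (s * t * γ) + t ^ 2 * ‖B‖ ^ 2 := by
        rw [norm_sub_sq_real, norm_smul, norm_smul, real_inner_smul_left,
          real_inner_smul_right]
        simp [mul_pow]
        ring
      have hnsa : ‖s • A‖ ^ 2 = s ^ 2 * ‖A‖ ^ 2 := by
        rw [norm_smul]; simp [mul_pow]
      rw [hexp, hnsa, hc2]
      have hb2 : (0:ℝ) < ‖B‖ ^ 2 := by positivity
      have hsq : 0 ≤ (s * γ / ‖B‖ - t * ‖B‖) ^ 2 := sq_nonneg _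
      have hid : (s * γ / ‖B‖ - t * ‖B‖) ^ 2
          = s ^ 2 * γ ^ 2 / ‖B‖ ^ 2 - 2 * (s * t * γ) + t ^ 2 * ‖B‖ ^ 2 := by
        field_simp
        ring
      rw [hid] at hsq
      have hdivle : (1 - γ ^ 2 / (‖A‖ * ‖B‖) ^ 2) * (s ^ 2 * ‖A‖ ^ 2)
          = s ^ 2 * ‖A‖ ^ 2 - s ^ 2 * γ ^ 2 / ‖B‖ ^ 2 := by
        field_simp
      rw [hdivle]
      linarith
    calc Real.sqrt c2 * ‖s • A‖ = Real.sqrt (c2 * ‖s • A‖ ^ 2) := by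
          rw [Real.sqrt_mul hc2pos.le, Real.sqrt_sq (norm_nonneg _)]
      _ ≤ Real.sqrt (‖s • A - t • B‖ ^ 2) := Real.sqrt_le_sqrt key
      _ = ‖s • A - t • B‖ := Real.sqrt_sq (norm_nonneg _)

lemma menger_le_xz {n : ℕ} (x y z : EuclideanSpace ℝ (Fin n)) :
    menger x y z ≤ 4 / dist x z := by
  unfold menger
  split
  case isTrue h =>
    obtain ⟨hxy, hyz, hxz, -⟩ := h
    have dxz : 0 < dist x z := dist_pos.2 hxz
    have dyz : 0 < dist y z := dist_pos.2 hyz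
    have hd0 : 0 ≤ Metric.infDist z (affineSpan ℝ ({x, y} : Set (EuclideanSpace ℝ (Fin n))) :
        Set (EuclideanSpace ℝ (Fin n))) := Metric.infDist_nonneg
    have hd : Metric.infDist z (affineSpan ℝ ({x, y} : Set (EuclideanSpace ℝ (Fin n))) :
        Set (EuclideanSpace ℝ (Fin n))) ≤ dist y z := by
      rw [dist_comm]
      exact Metric.infDist_le_dist_of_mem (right_mem_affineSpan_pair ℝ x y)
    rw [div_le_div_iff₀ (by positivity) dxz]
    nlinarith
  case isFalse h => positivity

lemma menger_le_xy {n : ℕ} (x y z : EuclideanSpace ℝ (Fin n)) :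
    menger x y z ≤ 4 / dist x y := by
  unfold menger
  split
  case isTrue h =>
    obtain ⟨hxy, hyz, hxz, -⟩ := h
    have dxy : 0 < dist x y := dist_pos.2 hxy
    have dxz : 0 < dist x z := dist_pos.2 hxz
    have dyz : 0 < dist y z := dist_pos.2 hyz
    have hd0 : 0 ≤ Metric.infDist z (affineSpan ℝ ({x, y} : Set (EuclideanSpace ℝ (Fin n))) :
        Set (EuclideanSpace ℝ (Fin n))) := Metric.infDist_nonneg
    have hd1 : Metric.infDist z (affineSpan ℝ ({x, y} : Set (EuclideanSpace ℝ (Fin n))) :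
        Set (EuclideanSpace ℝ (Fin n))) ≤ dist y z := by
      rw [dist_comm]
      exact Metric.infDist_le_dist_of_mem (right_mem_affineSpan_pair ℝ x y)
    have hd2 : Metric.infDist z (affineSpan ℝ ({x, y} : Set (EuclideanSpace ℝ (Fin n))) :
        Set (EuclideanSpace ℝ (Fin n))) ≤ dist x z := by
      rw [dist_comm]
      exact Metric.infDist_le_dist_of_mem (left_mem_affineSpan_pair ℝ x y)
    have htri : dist x y ≤ dist x z + dist y z := by
      rw [dist_comm y z]
      exact dist_triangle x z y
    rw [div_le_div_iff₀ (by positivity) dxy]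
    nlinarith [mul_le_mul_of_nonneg_left htri hd0,
      mul_le_mul_of_nonneg_right hd2 dyz.le, mul_le_mul_of_nonneg_right hd1 dxz.le]
  case isFalse h => positivity

lemma oneD_lt_top {p : ℝ} (hp0 : 0 < p) (hp1 : p < 1) (L t₀ : ℝ) :
    ∫⁻ t in Icc (0:ℝ) L, (ENNReal.ofReal |t - t₀|)⁻¹ ^ p ∂volume < ⊤ := by
  set A := min 0 t₀ with hA
  set B := max L t₀ with hB
  have hAt : A ≤ t₀ := min_le_right _ _
  have htB : t₀ ≤ B := le_max_right _ _
  have hexp : (-1 : ℝ) < -p := by linarith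
  have hIntR : IntegrableOn (fun t : ℝ => |t - t₀| ^ (-p)) (Icc t₀ B) := by
    have i1 : IntervalIntegrable (fun s : ℝ => s ^ (-p)) volume 0 (B - t₀) :=
      intervalIntegral.intervalIntegrable_rpow' hexp
    have i2 := i1.comp_sub_right t₀
    simp only [zero_add, sub_add_cancel] at i2
    have i3 : IntegrableOn (fun t : ℝ => (t - t₀) ^ (-p)) (Icc t₀ B) :=
      (intervalIntegrable_iff_integrableOn_Icc_of_le htB).1 i2
    refine i3.congr_fun (fun t ht => ?_) measurableSet_Icc
    rw [abs_of_nonneg (sub_nonneg.2 ht.1)]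
  have hIntL : IntegrableOn (fun t : ℝ => |t - t₀| ^ (-p)) (Icc A t₀) := by
    have i1 : IntervalIntegrable (fun s : ℝ => s ^ (-p)) volume 0 (t₀ - A) :=
      intervalIntegral.intervalIntegrable_rpow' hexp
    have i2 := i1.comp_sub_left t₀
    simp only [sub_zero, sub_sub_cancel] at i2
    have i3 : IntegrableOn (fun t : ℝ => (t₀ - t) ^ (-p)) (Icc A t₀) :=
      (intervalIntegrable_iff_integrableOn_Icc_of_le hAt).1 i2.symm
    refine i3.congr_fun (fun t ht => ?_) measurableSet_Icc
    rw [abs_of_nonpos (sub_nonpos.2 ht.2), neg_sub]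
  have hInt : IntegrableOn (fun t : ℝ => |t - t₀| ^ (-p)) (Icc (0:ℝ) L) := by
    refine (hIntL.union hIntR).mono_set (fun t ht => ?_)
    rcases le_total t t₀ with h | h
    · exact Or.inl ⟨le_trans (min_le_left _ _) ht.1, h⟩
    · exact Or.inr ⟨h, le_trans ht.2 (le_max_left _ _)⟩
  have hlt := hInt.setLIntegral_lt_top
  refine lt_of_le_of_lt (le_of_eq ?_) hlt
  apply lintegral_congr_ae
  have hsub : {t : ℝ | ¬ ((ENNReal.ofReal |t - t₀|)⁻¹ ^ p = ENNReal.ofReal (|t - t₀| ^ (-p)))}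
      ⊆ {t₀} := by
    intro t ht
    by_contra hne
    apply ht
    have hd : 0 < |t - t₀| := abs_pos.2 (sub_ne_zero.2 (by simpa using hne))
    rw [← ENNReal.ofReal_inv_of_pos hd, ENNReal.ofReal_rpow_of_pos (by positivity),
      Real.inv_rpow (abs_nonneg _), ← Real.rpow_neg (abs_nonneg _)]
  refine measure_mono_null hsub ?_
  rw [Measure.restrict_apply (measurableSet_singleton t₀)]
  exact measure_mono_null (inter_subset_left) Real.volume_singleton

lemma seg_lintegral_lt_top {n : ℕ} (a b w : EuclideanSpace ℝ (Fin n)) (hab : a ≠ b)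
    (C : ℝ≥0∞) (hC : C ≠ ⊤) {p : ℝ} (hp0 : 0 < p) (hp1 : p < 1) :
    ∫⁻ x in segment ℝ a b, (C / ENNReal.ofReal (dist x w)) ^ p ∂μH[1] < ⊤ := by
  have hba : b - a ≠ 0 := sub_ne_zero.2 (Ne.symm hab)
  set u : EuclideanSpace ℝ (Fin n) := ‖b - a‖⁻¹ • (b - a) with hu_def
  have hu : ‖u‖ = 1 := norm_smul_inv_norm hba
  set L : ℝ := dist a b with hL
  set f : ℝ → EuclideanSpace ℝ (Fin n) := fun t => a + t • u with hf_def
  have hf : Isometry f := by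
    refine Isometry.of_dist_eq fun s t => ?_
    have h1 : f s - f t = (s - t) • u := by
      simp only [hf_def, sub_smul]
      abel
    rw [dist_eq_norm, h1, norm_smul, hu, mul_one, Real.norm_eq_abs, Real.dist_eq]
  have hemb : MeasurableEmbedding f := hf.isClosedEmbedding.measurableEmbedding
  have hLu : L • u = b - a := by
    rw [hL, dist_eq_norm' a b, hu_def, smul_smul, mul_inv_cancel₀ (norm_ne_zero_iff.2 hba),
      one_smul]
  have hL0 : (0:ℝ) < L := dist_pos.2 hab
  have himg : segment ℝ a b = f '' Icc 0 L := by
    rw [segment_eq_image']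
    ext x
    constructor
    · rintro ⟨θ, hθ, rfl⟩
      refine ⟨θ * L, ⟨mul_nonneg hθ.1 hL0.le, ?_⟩, ?_⟩
      · calc θ * L ≤ 1 * L := by nlinarith [hθ.2]
          _ = L := one_mul L
      · simp only [hf_def, mul_smul, hLu]
    · rintro ⟨t, ht, rfl⟩
      refine ⟨t / L, ⟨div_nonneg ht.1 hL0.le, (div_le_one hL0).2 ht.2⟩, ?_⟩
      simp only [hf_def]
      rw [← hLu, smul_smul, div_mul_cancel₀ _ hL0.ne']
  have hmeas : μH[1].restrict (f '' Icc 0 L) = Measure.map f (volume.restrict (Icc 0 L)) := by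
    refine Measure.ext fun B hB => ?_
    rw [Measure.map_apply hemb.measurable hB, Measure.restrict_apply hB,
      Measure.restrict_apply (hemb.measurable hB)]
    calc μH[1] (B ∩ f '' Icc 0 L) = μH[1] (f '' (Icc 0 L ∩ f ⁻¹' B)) := by
          rw [Set.image_inter_preimage, Set.inter_comm]
      _ = μH[1] (Icc 0 L ∩ f ⁻¹' B) := hf.hausdorffMeasure_image (Or.inl zero_le_one) _
      _ = volume (Icc 0 L ∩ f ⁻¹' B) := by rw [MeasureTheory.hausdorffMeasure_real]
      _ = volume (f ⁻¹' B ∩ Icc 0 L) := by rw [Set.inter_comm]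
  set t₀ : ℝ := inner ℝ u (w - a) with ht₀
  have hlow : ∀ t : ℝ, |t - t₀| ≤ dist (f t) w := by
    intro t
    have h1 : f t - w = t • u - (w - a) := by simp only [hf_def]; abel
    have h2 : (inner ℝ u (f t - w) : ℝ) = t - t₀ := by
      rw [h1, inner_sub_right, real_inner_smul_right, real_inner_self_eq_norm_sq, hu]
      ring_nf
      rw [ht₀]
    calc |t - t₀| = |(inner ℝ u (f t - w) : ℝ)| := by rw [h2]
      _ ≤ ‖u‖ * ‖f t - w‖ := abs_real_inner_le_norm u _
      _ = dist (f t) w := by rw [hu, one_mul, dist_eq_norm]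
  have step1 : ∫⁻ x in segment ℝ a b, (C / ENNReal.ofReal (dist x w)) ^ p ∂μH[1]
      = ∫⁻ t in Icc (0:ℝ) L, (C / ENNReal.ofReal (dist (f t) w)) ^ p ∂volume := by
    rw [himg]
    rw [show (μH[1] : Measure (EuclideanSpace ℝ (Fin n))).restrict (f '' Icc 0 L)
      = Measure.map f (volume.restrict (Icc 0 L)) from hmeas]
    exact hemb.lintegral_map _
  rw [step1]
  have step2 : ∫⁻ t in Icc (0:ℝ) L, (C / ENNReal.ofReal (dist (f t) w)) ^ p ∂volume
      ≤ ∫⁻ t in Icc (0:ℝ) L, (C / ENNReal.ofReal |t - t₀|) ^ p ∂volume := by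
    refine lintegral_mono fun t => ?_
    exact ENNReal.rpow_le_rpow
      (ENNReal.div_le_div_left (ENNReal.ofReal_le_ofReal (hlow t)) C) hp0.le
  refine lt_of_le_of_lt step2 ?_
  have step3 : ∀ t : ℝ, (C / ENNReal.ofReal |t - t₀|) ^ p
      = C ^ p * ((ENNReal.ofReal |t - t₀|)⁻¹) ^ p := by
    intro t
    rw [div_eq_mul_inv, ENNReal.mul_rpow_of_nonneg _ _ hp0.le]
  simp only [step3]
  rw [lintegral_const_mul' _ _ (ENNReal.rpow_ne_top_of_nonneg hp0.le hC)]
  exact ENNReal.mul_lt_top (ENNReal.rpow_lt_top_of_nonneg hp0.le hC)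
    (oneD_lt_top hp0 hp1 L t₀)

lemma lintegral_finset_biUnion_le {α : Type*} [MeasurableSpace α] (μ : Measure α)
    {ι : Type*} (s : Finset ι) (t : ι → Set α) (f : α → ℝ≥0∞) :
    ∫⁻ x in ⋃ i ∈ s, t i, f x ∂μ ≤ ∑ i ∈ s, ∫⁻ x in t i, f x ∂μ := by
  classical
  induction s using Finset.induction with
  | empty => simp
  | insert _ _ hnot ih =>
    rename_i a s
    rw [Finset.sum_insert hnot, Finset.set_biUnion_insert]
    exact le_trans (lintegral_union_le _ _ _) (add_le_add_right ih _)

end auxlemmas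

/-- Every simple polygon has finite global curvature energy for `p ∈ (0,1)`. -/
theorem Up_lt_top_of_isSimplePolygon {n : ℕ} (P : Set (EuclideanSpace ℝ (Fin n)))
    (hP : IsSimplePolygon P) (p : ℝ) (hp : p ∈ Set.Ioo (0:ℝ) 1) :
    Up p P < ⊤ := by
  obtain ⟨hp0, hp1⟩ := hp
  obtain ⟨N, v, hN3, hvne, hPeq, hcons, hdisj⟩ := hP
  classical
  set Vs : Set (EuclideanSpace ℝ (Fin n)) := ↑((Finset.range N).image v) with hVs
  have hVne : Vs.Nonempty := by
    refine ⟨v 0, ?_⟩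
    rw [hVs]
    exact Finset.mem_coe.2 (Finset.mem_image_of_mem v (Finset.mem_range.2 (by omega)))
  have hVmem : ∀ k, k < N → v k ∈ Vs := fun k hk =>
    Finset.mem_coe.2 (Finset.mem_image_of_mem v (Finset.mem_range.2 hk))
  have hVcompact : IsCompact Vs := ((Finset.range N).image v).finite_toSet.isCompact
  -- basic facts about segments
  have hSegcpt : ∀ i : ℕ, IsCompact (segment ℝ (v i) (v (i+1))) := by
    intro i
    rw [segment_eq_image']
    exact isCompact_Icc.image (by fun_prop)
  have hSegmeas : ∀ i : ℕ, MeasurableSet (segment ℝ (v i) (v (i+1))) := fun i =>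
    (hSegcpt i).isClosed.measurableSet
  have hSegsub : ∀ i : ℕ, segment ℝ (v i) (v (i+1)) ⊆
      (affineSpan ℝ ({v i, v (i+1)} : Set (EuclideanSpace ℝ (Fin n))) :
        Set (EuclideanSpace ℝ (Fin n))) := by
    intro i
    exact (affineSpan ℝ ({v i, v (i+1)} : Set (EuclideanSpace ℝ (Fin n)))).convex.segment_subset
      (left_mem_affineSpan_pair ℝ _ _) (right_mem_affineSpan_pair ℝ _ _)
  have hxlen : ∀ i : ℕ, ∀ x ∈ segment ℝ (v i) (v (i+1)),
      dist x (v i) ≤ dist (v i) (v (i+1)) := by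
    intro i x hx
    rw [segment_eq_image'] at hx
    obtain ⟨θ, hθ, rfl⟩ := hx
    rw [dist_eq_norm, add_sub_cancel_left, norm_smul, Real.norm_eq_abs,
      abs_of_nonneg hθ.1, dist_eq_norm]
    nlinarith [norm_nonneg (v (i+1) - v i), hθ.1, hθ.2, norm_sub_rev (v (i+1)) (v i)]
  have hPmeas : MeasurableSet P := by
    rw [hPeq]
    exact (Finset.range (N-1)).measurableSet_biUnion fun i _ => hSegmeas i
  -- the per-pair lower bound on distances
  have key : ∀ i ∈ Finset.range (N-1), ∀ j ∈ Finset.range (N-1), ∃ c : ℝ, 0 < c ∧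
      ∀ x ∈ segment ℝ (v i) (v (i+1)), ∀ w ∈ segment ℝ (v j) (v (j+1)),
        w ∉ (affineSpan ℝ ({v i, v (i+1)} : Set (EuclideanSpace ℝ (Fin n))) :
          Set (EuclideanSpace ℝ (Fin n))) →
        c * Metric.infDist x Vs ≤ dist x w := by
    intro i hi j hj
    rw [Finset.mem_range] at hi hj
    by_cases hadj1 : j = i + 1
    · -- adjacent, shared vertex v (i+1)
      subst hadj1
      by_cases hdep : ∃ r : ℝ, v (i+2) - v (i+1) = r • (v i - v (i+1))
      · refine ⟨1, one_pos, fun x hx w hw hwl => absurd ?_ hwl⟩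
        obtain ⟨r, hr⟩ := hdep
        rw [segment_eq_image'] at hw
        obtain ⟨θ, hθ, rfl⟩ := hw
        have heq : v (i+1) + θ • (v (i+1+1) - v (i+1))
            = AffineMap.lineMap (v (i+1)) (v i) (θ * r) := by
          rw [AffineMap.lineMap_apply]
          show _ = (θ * r) • (v i -ᵥ v (i+1)) +ᵥ v (i+1)
          rw [vsub_eq_sub, vadd_eq_add]
          rw [show (i+1+1) = i+2 from rfl, hr, smul_smul]
          abel
        have hmem := AffineMap.lineMap_mem_affineSpan_pair (k := ℝ) (θ * r) (v (i+1)) (v i)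
        rw [Set.pair_comm (v (i+1)) (v i)] at hmem
        rw [← heq] at hmem
        exact hmem
      · push_neg at hdep
        obtain ⟨c, hc, hq⟩ := quad_aux (v i - v (i+1)) (v (i+2) - v (i+1)) hdep
        refine ⟨c, hc, fun x hx w hw hwl => ?_⟩
        rw [segment_symm, segment_eq_image'] at hx
        obtain ⟨s, hs, rfl⟩ := hx
        rw [segment_eq_image'] at hw
        obtain ⟨t, ht, rfl⟩ := hw
        have hdxw : dist (v (i+1) + s • (v i - v (i+1)))
            (v (i+1) + t • (v (i+1+1) - v (i+1)))
            = ‖s • (v i - v (i+1)) - t • (v (i+2) - v (i+1))‖ := by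
          rw [dist_eq_norm, show (i+1+1) = i+2 from rfl]
          congr 1
          abel
        have hdxu : dist (v (i+1) + s • (v i - v (i+1))) (v (i+1))
            = ‖s • (v i - v (i+1))‖ := by
          rw [dist_eq_norm, add_sub_cancel_left]
        calc c * Metric.infDist (v (i+1) + s • (v i - v (i+1))) Vs
            ≤ c * dist (v (i+1) + s • (v i - v (i+1))) (v (i+1)) :=
              mul_le_mul_of_nonneg_left
                (Metric.infDist_le_dist_of_mem (hVmem (i+1) (by omega))) hc.le
          _ = c * ‖s • (v i - v (i+1))‖ := by rw [hdxu]
          _ ≤ ‖s • (v i - v (i+1)) - t • (v (i+2) - v (i+1))‖ := hq s t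
          _ = _ := hdxw.symm
    · by_cases hadj2 : i = j + 1
      · -- adjacent, shared vertex v i = v (j+1)
        subst hadj2
        by_cases hdep : ∃ r : ℝ, v j - v (j+1) = r • (v (j+2) - v (j+1))
        · refine ⟨1, one_pos, fun x hx w hw hwl => absurd ?_ hwl⟩
          obtain ⟨r, hr⟩ := hdep
          rw [segment_symm, segment_eq_image'] at hw
          obtain ⟨θ, hθ, rfl⟩ := hw
          have heq : v (j+1) + θ • (v j - v (j+1))
              = AffineMap.lineMap (v (j+1)) (v (j+1+1)) (θ * r) := by
            rw [AffineMap.lineMap_apply]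
            show _ = (θ * r) • (v (j+1+1) -ᵥ v (j+1)) +ᵥ v (j+1)
            rw [vsub_eq_sub, vadd_eq_add]
            rw [show (j+1+1) = j+2 from rfl, hr, smul_smul]
            abel
          have hmem := AffineMap.lineMap_mem_affineSpan_pair
            (k := ℝ) (θ * r) (v (j+1)) (v (j+1+1))
          rw [← heq] at hmem
          exact hmem
        · push_neg at hdep
          obtain ⟨c, hc, hq⟩ := quad_aux (v (j+2) - v (j+1)) (v j - v (j+1)) hdep
          refine ⟨c, hc, fun x hx w hw hwl => ?_⟩
          rw [segment_eq_image'] at hx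
          obtain ⟨s, hs, rfl⟩ := hx
          rw [segment_symm, segment_eq_image'] at hw
          obtain ⟨t, ht, rfl⟩ := hw
          have hdxw : dist (v (j+1) + s • (v (j+1+1) - v (j+1)))
              (v (j+1) + t • (v j - v (j+1)))
              = ‖s • (v (j+2) - v (j+1)) - t • (v j - v (j+1))‖ := by
            rw [dist_eq_norm, show (j+1+1) = j+2 from rfl]
            congr 1
            abel
          have hdxu : dist (v (j+1) + s • (v (j+1+1) - v (j+1))) (v (j+1))
              = ‖s • (v (j+1+1) - v (j+1))‖ := by
            rw [dist_eq_norm, add_sub_cancel_left]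
          calc c * Metric.infDist (v (j+1) + s • (v (j+1+1) - v (j+1))) Vs
              ≤ c * dist (v (j+1) + s • (v (j+1+1) - v (j+1))) (v (j+1)) :=
                mul_le_mul_of_nonneg_left
                  (Metric.infDist_le_dist_of_mem (hVmem (j+1) (by omega))) hc.le
            _ = c * ‖s • (v (j+1+1) - v (j+1))‖ := by rw [hdxu]
            _ ≤ ‖s • (v (j+2) - v (j+1)) - t • (v j - v (j+1))‖ := by
                exact le_trans (le_of_eq (by rw [show (j+1+1) = j+2 from rfl])) (hq s t)
            _ = _ := hdxw.symm
      · by_cases hsame : i = j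
        · subst hsame
          exact ⟨1, one_pos, fun x hx w hw hwl => absurd (hSegsub i hw) hwl⟩
        · -- non-adjacent
          have hempty : segment ℝ (v i) (v (i+1)) ∩ segment ℝ (v j) (v (j+1)) = ∅ := by
            rcases lt_or_gt_of_ne hsame with h | h
            · exact hdisj i j (by omega) (by omega)
            · rw [Set.inter_comm]
              exact hdisj j i (by omega) (by omega)
          obtain ⟨r, hr0, hr⟩ := EMetric.exists_pos_forall_lt_edist (hSegcpt i)
            (hSegcpt j).isClosed (Set.disjoint_iff_inter_eq_empty.2 hempty)
          have hlen0 : (0:ℝ) < dist (v i) (v (i+1)) := dist_pos.2 (hvne i (by omega))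
          refine ⟨(r : ℝ) / dist (v i) (v (i+1)), by positivity, fun x hx w hw hwl => ?_⟩
          have hrd : (r : ℝ) ≤ dist x w := by
            have h1 := hr x hx w hw
            rw [edist_dist] at h1
            have h2 : (r : ℝ≥0∞) = ENNReal.ofReal (r : ℝ) := by
              rw [ENNReal.ofReal_coe_nnreal]
            rw [h2] at h1
            exact le_of_lt ((ENNReal.ofReal_lt_ofReal_iff_of_nonneg r.2).1 h1)
          calc (r : ℝ) / dist (v i) (v (i+1)) * Metric.infDist x Vs
              ≤ (r : ℝ) / dist (v i) (v (i+1)) * dist (v i) (v (i+1)) := by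
                refine mul_le_mul_of_nonneg_left ?_ (by positivity)
                exact le_trans (Metric.infDist_le_dist_of_mem (hVmem i (by omega)))
                  (hxlen i x hx)
            _ = (r : ℝ) := div_mul_cancel₀ _ hlen0.ne'
            _ ≤ dist x w := hrd
  -- combine constants
  choose! F hF0 hF1 using key
  have hprodne : ((Finset.range (N-1)) ×ˢ (Finset.range (N-1))).Nonempty := by
    refine ⟨(0,0), ?_⟩
    rw [Finset.mem_product]
    constructor <;> (rw [Finset.mem_range]; omega)
  set c₀ : ℝ := ((Finset.range (N-1)) ×ˢ (Finset.range (N-1))).inf' hprodne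
    (fun q => F q.1 q.2) with hc₀
  have hc₀pos : 0 < c₀ := by
    rw [hc₀, Finset.lt_inf'_iff]
    rintro ⟨i, j⟩ hq
    rw [Finset.mem_product] at hq
    exact hF0 i hq.1 j hq.2
  have hc₀le : ∀ i ∈ Finset.range (N-1), ∀ j ∈ Finset.range (N-1), c₀ ≤ F i j := by
    intro i hi j hj
    have hmem : (i, j) ∈ (Finset.range (N-1)) ×ˢ (Finset.range (N-1)) :=
      Finset.mem_product.2 ⟨hi, hj⟩
    exact Finset.inf'_le _ hmem
  -- master pointwise bound
  have hmaster : ∀ x ∈ P, ∀ y ∈ P, ∀ z ∈ P,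
      ENNReal.ofReal (menger x y z)
        ≤ ENNReal.ofReal (4 / c₀) / ENNReal.ofReal (Metric.infDist x Vs) := by
    intro x hx y hy z hz
    by_cases hcond : x ≠ y ∧ y ≠ z ∧ x ≠ z ∧
        ¬ Collinear ℝ ({x, y, z} : Set (EuclideanSpace ℝ (Fin n)))
    swap
    · rw [menger, if_neg hcond]
      simp
    · have hx' := hx
      rw [hPeq] at hx'
      simp only [Set.mem_iUnion] at hx'
      obtain ⟨i, hi, hxi⟩ := hx'
      have hnotboth : ¬ (y ∈ (affineSpan ℝ ({v i, v (i+1)} :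
            Set (EuclideanSpace ℝ (Fin n))) : Set (EuclideanSpace ℝ (Fin n))) ∧
          z ∈ (affineSpan ℝ ({v i, v (i+1)} : Set (EuclideanSpace ℝ (Fin n))) :
            Set (EuclideanSpace ℝ (Fin n)))) := by
        rintro ⟨hyL, hzL⟩
        exact hcond.2.2.2 (collinear_triple_of_mem_affineSpan_pair (hSegsub i hxi) hyL hzL)
      obtain ⟨w, hwP, hwL, hmw⟩ : ∃ w, w ∈ P ∧
          w ∉ (affineSpan ℝ ({v i, v (i+1)} : Set (EuclideanSpace ℝ (Fin n))) :
            Set (EuclideanSpace ℝ (Fin n))) ∧ menger x y z ≤ 4 / dist x w := by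
        by_cases hyL : y ∈ (affineSpan ℝ ({v i, v (i+1)} :
            Set (EuclideanSpace ℝ (Fin n))) : Set (EuclideanSpace ℝ (Fin n)))
        · exact ⟨z, hz, fun h => hnotboth ⟨hyL, h⟩, menger_le_xz x y z⟩
        · exact ⟨y, hy, hyL, menger_le_xy x y z⟩
      have hwP' := hwP
      rw [hPeq] at hwP'
      simp only [Set.mem_iUnion] at hwP'
      obtain ⟨j, hj, hwj⟩ := hwP'
      have hkey := hF1 i hi j hj x hxi w hwj hwL
      have hI0 : 0 ≤ Metric.infDist x Vs := Metric.infDist_nonneg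
      rcases eq_or_lt_of_le hI0 with hI | hI
      · rw [← hI, ENNReal.ofReal_zero, ENNReal.div_zero (by
          refine (ENNReal.ofReal_pos.2 ?_).ne'
          positivity)]
        exact le_top
      · have hcI : c₀ * Metric.infDist x Vs ≤ dist x w :=
          le_trans (mul_le_mul_of_nonneg_right (hc₀le i hi j hj) hI0) hkey
        have hcIpos : 0 < c₀ * Metric.infDist x Vs := by positivity
        have h1 : menger x y z ≤ 4 / (c₀ * Metric.infDist x Vs) := by
          refine le_trans hmw ?_
          gcongr
        have h2 : menger x y z ≤ (4 / c₀) / Metric.infDist x Vs := by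
          rw [div_div]
          exact h1
        calc ENNReal.ofReal (menger x y z) ≤ ENNReal.ofReal ((4 / c₀) / Metric.infDist x Vs) :=
            ENNReal.ofReal_le_ofReal h2
          _ = ENNReal.ofReal (4 / c₀) / ENNReal.ofReal (Metric.infDist x Vs) :=
            ENNReal.ofReal_div_of_pos hI
  set C : ℝ≥0∞ := ENNReal.ofReal (4 / c₀) with hC
  have hCne : C ≠ ⊤ := ENNReal.ofReal_ne_top
  -- pointwise bound on the supremum, vertex-wise
  have hsup : ∀ x ∈ P, (⨆ y ∈ P, ⨆ z ∈ P, ENNReal.ofReal (menger x y z)) ^ p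
      ≤ ∑ k ∈ Finset.range N, (C / ENNReal.ofReal (dist x (v k))) ^ p := by
    intro x hx
    obtain ⟨q, hqV, hq⟩ := hVcompact.exists_infDist_eq_dist hVne x
    have hqV' : q ∈ (Finset.range N).image v := Finset.mem_coe.1 hqV
    rw [Finset.mem_image] at hqV'
    obtain ⟨k, hk, rfl⟩ := hqV'
    have h1 : (⨆ y ∈ P, ⨆ z ∈ P, ENNReal.ofReal (menger x y z))
        ≤ C / ENNReal.ofReal (dist x (v k)) := by
      rw [← hq]
      exact iSup₂_le fun y hy => iSup₂_le fun z hz => hmaster x hx y hy z hz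
    calc (⨆ y ∈ P, ⨆ z ∈ P, ENNReal.ofReal (menger x y z)) ^ p
        ≤ (C / ENNReal.ofReal (dist x (v k))) ^ p := ENNReal.rpow_le_rpow h1 hp0.le
      _ ≤ ∑ k ∈ Finset.range N, (C / ENNReal.ofReal (dist x (v k))) ^ p :=
          Finset.single_le_sum (f := fun k => (C / ENNReal.ofReal (dist x (v k))) ^ p)
            (fun _ _ => zero_le) hk
  have hmeasterm : ∀ k : ℕ, Measurable fun x : EuclideanSpace ℝ (Fin n) =>
      (C / ENNReal.ofReal (dist x (v k))) ^ p := by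
    intro k
    have m1 : Measurable fun x : EuclideanSpace ℝ (Fin n) =>
        ENNReal.ofReal (dist x (v k)) :=
      (ENNReal.continuous_ofReal.comp
        (Continuous.dist continuous_id continuous_const)).measurable
    simp only [div_eq_mul_inv]
    exact ENNReal.continuous_rpow_const.measurable.comp (m1.inv.const_mul C)
  -- assembling
  have hUb : Up p P ≤ ∑ i ∈ Finset.range (N-1), ∑ k ∈ Finset.range N,
      ∫⁻ x in segment ℝ (v i) (v (i+1)),
        (C / ENNReal.ofReal (dist x (v k))) ^ p ∂μH[1] := by
    have s1 : Up p P ≤ ∫⁻ x in P, ∑ k ∈ Finset.range N,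
        (C / ENNReal.ofReal (dist x (v k))) ^ p ∂μH[1] := by
      rw [Up]
      refine lintegral_mono_ae ?_
      rw [ae_restrict_iff' hPmeas]
      exact ae_of_all _ hsup
    have s2 : ∫⁻ x in P, ∑ k ∈ Finset.range N,
        (C / ENNReal.ofReal (dist x (v k))) ^ p ∂μH[1]
        ≤ ∑ i ∈ Finset.range (N-1), ∫⁻ x in segment ℝ (v i) (v (i+1)),
          ∑ k ∈ Finset.range N, (C / ENNReal.ofReal (dist x (v k))) ^ p ∂μH[1] := by
      rw [hPeq]
      exact lintegral_finset_biUnion_le _ _ _ _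
    have s3 : ∀ i ∈ Finset.range (N-1), ∫⁻ x in segment ℝ (v i) (v (i+1)),
        ∑ k ∈ Finset.range N, (C / ENNReal.ofReal (dist x (v k))) ^ p ∂μH[1]
        = ∑ k ∈ Finset.range N, ∫⁻ x in segment ℝ (v i) (v (i+1)),
          (C / ENNReal.ofReal (dist x (v k))) ^ p ∂μH[1] := by
      intro i _
      exact lintegral_finset_sum _ (fun k _ => hmeasterm k)
    refine le_trans s1 (le_trans s2 (le_of_eq (Finset.sum_congr rfl s3)))
  refine lt_of_le_of_lt hUb ?_
  refine ENNReal.sum_lt_top.2 fun i hi => ?_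
  refine ENNReal.sum_lt_top.2 fun k hk => ?_
  refine seg_lintegral_lt_top (v i) (v (i+1)) (v k) ?_ C hCne hp0 hp1
  refine hvne i ?_
  rw [Finset.mem_range] at hi
  omega
end

section
/- Let P ⊆ ℝⁿ be a simple polygon with finitely many vertices whose vertices are not all collinear (i.e., P is not contained in a straight line), and let p ≥ 2. Then the intermediate energy of P is infinite: I_p(P) = ∞. -/
open MeasureTheory Real
open scoped ENNReal NNReal Classical

/-- Divergence of `∫ K/t` near `0`. -/
lemma lintegral_Ioc_div_eq_top {K δ : ℝ} (hK : 0 < K) (hδ : 0 < δ) :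
    ∫⁻ t in Set.Ioc (0:ℝ) δ, ENNReal.ofReal (K / t) = ⊤ := by
  have h2 : ∀ k : ℕ, (0:ℝ) < 2 ^ k := fun k => by positivity
  have hsub : (⋃ k : ℕ, Set.Ioc (δ/2^(k+1)) (δ/2^k)) ⊆ Set.Ioc (0:ℝ) δ := by
    rintro t ht
    simp only [Set.mem_iUnion] at ht
    obtain ⟨k, hk1, hk2⟩ := ht
    have h0 : (0:ℝ) < δ/2^(k+1) := by positivity
    refine ⟨lt_trans h0 hk1, hk2.trans ?_⟩
    rw [div_le_iff₀ (h2 k)]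
    nlinarith [one_le_pow₀ (one_le_two (α := ℝ)) (n := k)]
  have hdisj : Pairwise (Function.onFun Disjoint
      fun k : ℕ => Set.Ioc (δ/2^(k+1)) (δ/2^k)) := by
    have key : ∀ i j : ℕ, i < j → Disjoint (Set.Ioc (δ/2^(i+1)) (δ/2^i))
        (Set.Ioc (δ/2^(j+1)) (δ/2^j)) := by
      intro i j hij
      rw [Set.Ioc_disjoint_Ioc]
      refine le_trans (min_le_right _ _) (le_trans ?_ (le_max_left _ _))
      apply div_le_div_of_nonneg_left hδ.le (h2 _)
      exact pow_le_pow_right₀ one_le_two hij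
    intro i j hij
    rcases hij.lt_or_gt with h | h
    · exact key i j h
    · exact (key j i h).symm
  rw [← top_le_iff]
  calc (⊤:ℝ≥0∞) = ∑' _ : ℕ, ENNReal.ofReal (K/2) :=
        (ENNReal.tsum_const_eq_top_of_ne_zero (by
          simp only [ne_eq, ENNReal.ofReal_eq_zero, not_le]; positivity)).symm
    _ ≤ ∑' k : ℕ, ∫⁻ t in Set.Ioc (δ/2^(k+1)) (δ/2^k), ENNReal.ofReal (K / t) := by
        refine ENNReal.tsum_le_tsum fun k => ?_
        have h1 : ENNReal.ofReal (K/2)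
            = ENNReal.ofReal (K * 2^k / δ) * volume (Set.Ioc (δ/2^(k+1)) (δ/2^k)) := by
          rw [Real.volume_Ioc, ← ENNReal.ofReal_mul (by positivity)]
          congr 1
          field_simp
          ring
        rw [h1, ← setLIntegral_const]
        refine setLIntegral_mono' measurableSet_Ioc fun t ht => ENNReal.ofReal_le_ofReal ?_
        have ht0 : 0 < t := lt_trans (by positivity) ht.1
        calc K * 2^k / δ = K / (δ / 2^k) := by field_simp
          _ ≤ K / t := div_le_div_of_nonneg_left hK.le ht0 ht.2
    _ = ∫⁻ t in ⋃ k : ℕ, Set.Ioc (δ/2^(k+1)) (δ/2^k), ENNReal.ofReal (K / t) :=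
        (lintegral_iUnion (fun _ => measurableSet_Ioc) hdisj _).symm
    _ ≤ ∫⁻ t in Set.Ioc (0:ℝ) δ, ENNReal.ofReal (K / t) := lintegral_mono_set hsub

/-- Change of variables for lintegral along an isometric line parametrization. -/
lemma lintegral_image_line {n : ℕ} {a w : EuclideanSpace ℝ (Fin n)} (ha : ‖a‖ = 1)
    (G : EuclideanSpace ℝ (Fin n) → ℝ≥0∞) {A : Set ℝ} (hA : MeasurableSet A) :
    ∫⁻ x in (fun s : ℝ => s • a + w) '' A, G x ∂μH[1] = ∫⁻ s in A, G (s • a + w) := by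
  set f : ℝ → EuclideanSpace ℝ (Fin n) := fun s => s • a + w with hf
  have hiso : Isometry f := Isometry.of_dist_eq (fun s t => by
    have h1 : f s - f t = (s - t) • a := by simp only [hf]; module
    rw [dist_eq_norm, h1, norm_smul, ha, Real.dist_eq, Real.norm_eq_abs, mul_one])
  have hemb : MeasurableEmbedding f := hiso.isClosedEmbedding.measurableEmbedding
  have hSm : MeasurableSet (f '' A) := hemb.measurableSet_image.2 hA
  have hmap : Measure.map f volume = (μH[1] : Measure (EuclideanSpace ℝ (Fin n))).restrict
      (Set.range f) := by
    rw [← MeasureTheory.hausdorffMeasure_real]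
    exact hiso.map_hausdorffMeasure (Or.inl zero_le_one)
  have h1 : (μH[1] : Measure (EuclideanSpace ℝ (Fin n))).restrict (f '' A)
      = Measure.map f (volume.restrict A) := by
    calc (μH[1] : Measure (EuclideanSpace ℝ (Fin n))).restrict (f '' A)
        = ((μH[1] : Measure (EuclideanSpace ℝ (Fin n))).restrict (Set.range f)).restrict
            (f '' A) := by
          rw [Measure.restrict_restrict hSm,
            Set.inter_eq_self_of_subset_left (Set.image_subset_range f A)]
      _ = (Measure.map f volume).restrict (f '' A) := by rw [hmap]
      _ = Measure.map f (volume.restrict (f ⁻¹' (f '' A))) :=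
          Measure.restrict_map hiso.continuous.measurable hSm
      _ = Measure.map f (volume.restrict A) := by rw [hemb.injective.preimage_image]
  rw [h1, hemb.lintegral_map]

/-- A uniform lower bound `‖α a + β b‖ ≥ c₀ max(|α|,|β|)` for linearly independent `a b`. -/
lemma exists_transversality {n : ℕ} {a b : EuclideanSpace ℝ (Fin n)}
    (hab : b ∉ Submodule.span ℝ {a}) (hba : a ∉ Submodule.span ℝ {b}) :
    ∃ c₀ : ℝ, 0 < c₀ ∧ ∀ α β : ℝ, c₀ * max |α| |β| ≤ ‖α • a + β • b‖ := by
  set Sa : Set (EuclideanSpace ℝ (Fin n)) := ↑(Submodule.span ℝ {a})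
  set Sb : Set (EuclideanSpace ℝ (Fin n)) := ↑(Submodule.span ℝ {b})
  have hSa : IsClosed Sa := Submodule.closed_of_finiteDimensional _
  have hSb : IsClosed Sb := Submodule.closed_of_finiteDimensional _
  have hda : 0 < Metric.infDist a Sb :=
    (hSb.notMem_iff_infDist_pos ⟨0, Submodule.zero_mem _⟩).1 hba
  have hdb : 0 < Metric.infDist b Sa :=
    (hSa.notMem_iff_infDist_pos ⟨0, Submodule.zero_mem _⟩).1 hab
  -- key scalar bound
  have key : ∀ (u v : EuclideanSpace ℝ (Fin n)) (S : Set (EuclideanSpace ℝ (Fin n))),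
      (∀ μ : ℝ, μ • v ∈ S) → ∀ α β : ℝ,
      Metric.infDist u S * |α| ≤ ‖α • u + β • v‖ := by
    intro u v S hS α β
    rcases eq_or_ne α 0 with h | h
    · simp [h, Metric.infDist_nonneg]
    · have h1 : α • u + β • v = α • (u - (-(β/α)) • v) := by
        have h0 : α * -(β/α) = -β := by field_simp
        rw [smul_sub, smul_smul, h0, neg_smul, sub_neg_eq_add]
      rw [h1, norm_smul, Real.norm_eq_abs, mul_comm |α| _]
      have h2 : Metric.infDist u S ≤ ‖u - (-(β/α)) • v‖ := by
        rw [← dist_eq_norm]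
        exact Metric.infDist_le_dist_of_mem (hS _)
      exact mul_le_mul_of_nonneg_right h2 (abs_nonneg _)
  refine ⟨min (Metric.infDist a Sb) (Metric.infDist b Sa), lt_min hda hdb, fun α β => ?_⟩
  rcases max_cases |α| |β| with ⟨hm, _⟩ | ⟨hm, _⟩
  · rw [hm]
    calc min (Metric.infDist a Sb) (Metric.infDist b Sa) * |α|
        ≤ Metric.infDist a Sb * |α| :=
          mul_le_mul_of_nonneg_right (min_le_left _ _) (abs_nonneg _)
      _ ≤ ‖α • a + β • b‖ := key a b Sb (fun μ => Submodule.smul_mem _ μ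
          (Submodule.mem_span_singleton_self b)) α β
  · rw [hm]
    calc min (Metric.infDist a Sb) (Metric.infDist b Sa) * |β|
        ≤ Metric.infDist b Sa * |β| :=
          mul_le_mul_of_nonneg_right (min_le_right _ _) (abs_nonneg _)
      _ ≤ ‖α • a + β • b‖ := by
          have := key b a Sa (fun μ => Submodule.smul_mem _ μ
            (Submodule.mem_span_singleton_self a)) β α
          rwa [add_comm] at this

lemma menger_corner {n : ℕ} {a b w : EuclideanSpace ℝ (Fin n)} {c₀ : ℝ} (hc₀ : 0 < c₀)
    (ha : ‖a‖ = 1) (hb : ‖b‖ = 1)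
    (hC : ∀ α β : ℝ, c₀ * max |α| |β| ≤ ‖α • a + β • b‖) {s t : ℝ}
    (hs : 0 < s) (ht : 0 < t) :
    c₀ / (s + t) ≤ menger (s • a + w) (t • b + w) w := by
  have hst : 0 < s + t := by linarith
  have hnz : ∀ α β : ℝ, (α ≠ 0 ∨ β ≠ 0) → α • a + β • b ≠ 0 := by
    intro α β hor h0
    have h1 := hC α β
    rw [h0, norm_zero] at h1
    have hmax : 0 < max |α| |β| := by
      rcases hor with h | h
      · exact lt_max_of_lt_left (abs_pos.2 h)
      · exact lt_max_of_lt_right (abs_pos.2 h)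
    nlinarith
  have hdx : dist (s • a + w) w = s := by
    have e : s • a + w - w = s • a := add_sub_cancel_right _ _
    rw [dist_eq_norm, e, norm_smul, ha, Real.norm_eq_abs, abs_of_pos hs, mul_one]
  have hdy : dist (t • b + w) w = t := by
    have e : t • b + w - w = t • b := add_sub_cancel_right _ _
    rw [dist_eq_norm, e, norm_smul, hb, Real.norm_eq_abs, abs_of_pos ht, mul_one]
  have hxw : s • a + w ≠ w := by
    intro h
    rw [h, dist_self] at hdx
    exact hs.ne hdx
  have hyw : t • b + w ≠ w := by
    intro h
    rw [h, dist_self] at hdy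
    exact ht.ne hdy
  have hxy : s • a + w ≠ t • b + w := by
    intro h
    apply hnz s (-t) (Or.inl hs.ne')
    have : s • a + (-t) • b = (s • a + w) - (t • b + w) := by module
    rw [this, h, sub_self]
  have hncol : ¬ Collinear ℝ ({s • a + w, t • b + w, w} :
      Set (EuclideanSpace ℝ (Fin n))) := by
    intro hcl
    have hy : t • b + w ∈ line[ℝ, s • a + w, w] :=
      hcl.mem_affineSpan_of_mem_of_ne (Set.mem_insert _ _)
        (by simp) (by simp) hxw
    obtain ⟨r, hr⟩ := vadd_left_mem_affineSpan_pair.1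
      (show ((t • b + w) -ᵥ (s • a + w)) +ᵥ (s • a + w) ∈ _ by rwa [vsub_vadd])
    rw [vsub_eq_sub, vsub_eq_sub] at hr
    apply hnz (s - r*s) (-t) (Or.inr (neg_ne_zero.2 ht.ne'))
    have h3 : (s - r*s) • a + (-t) • b
        = r • (w - (s • a + w)) - ((t • b + w) - (s • a + w)) := by module
    rw [hr, sub_self] at h3
    exact h3
  have hm : c₀ * (s*t/(s+t)) ≤ Metric.infDist w
      ((affineSpan ℝ ({s • a + w, t • b + w} : Set (EuclideanSpace ℝ (Fin n)))) :
        Set (EuclideanSpace ℝ (Fin n))) := by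
    by_contra hlt
    push_neg at hlt
    rw [Metric.infDist_lt_iff ⟨_, subset_affineSpan ℝ _ (Set.mem_insert _ _)⟩] at hlt
    obtain ⟨q, hq, hqlt⟩ := hlt
    obtain ⟨r, hr⟩ := vadd_left_mem_affineSpan_pair.1
      (show (q -ᵥ (s • a + w)) +ᵥ (s • a + w) ∈ _ by rwa [vsub_vadd])
    rw [vsub_eq_sub, vsub_eq_sub] at hr
    have h5 : q = r • ((t • b + w) - (s • a + w)) + (s • a + w) := by
      rw [hr]; abel
    have h4 : q - w = ((1-r)*s) • a + (r*t) • b := by rw [h5]; module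
    have h6 := hC ((1-r)*s) (r*t)
    rw [← h4] at h6
    have h8 : s*t/(s+t) ≤ max (|(1-r)*s|) (|r*t|) := by
      rcases le_or_gt (s/(s+t)) |r| with hcase | hcase
      · refine le_trans ?_ (le_max_right _ _)
        rw [abs_mul, abs_of_pos ht]
        calc s*t/(s+t) = (s/(s+t))*t := by ring
          _ ≤ |r| * t := mul_le_mul_of_nonneg_right hcase ht.le
      · refine le_trans ?_ (le_max_left _ _)
        rw [abs_mul, abs_of_pos hs]
        have h9 : t/(s+t) ≤ |1 - r| := by
          have h10 : |(1:ℝ)| - |r| ≤ |(1:ℝ) - r| := abs_sub_abs_le_abs_sub 1 r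
          rw [abs_one] at h10
          have h11 : 1 - s/(s+t) = t/(s+t) := by field_simp; ring
          linarith
        calc s*t/(s+t) = (t/(s+t))*s := by ring
          _ ≤ |1-r| * s := mul_le_mul_of_nonneg_right h9 hs.le
    have h12 : c₀ * (s*t/(s+t)) ≤ dist w q := by
      rw [dist_comm, dist_eq_norm, h4]
      calc c₀ * (s*t/(s+t)) ≤ c₀ * max (|(1-r)*s|) (|r*t|) :=
            mul_le_mul_of_nonneg_left h8 hc₀.le
        _ ≤ _ := by rw [h4] at h6; exact h6
    exact absurd hqlt (not_lt.2 h12)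
  unfold menger
  rw [if_pos ⟨hxy, hyw, hxw, hncol⟩, hdx, hdy]
  have e : 2 * (c₀ * (s*t/(s+t))) / (s*t) = 2*c₀/(s+t) := by
    field_simp
  calc c₀/(s+t) ≤ 2*c₀/(s+t) := by gcongr; linarith
    _ = 2 * (c₀ * (s*t/(s+t))) / (s*t) := e.symm
    _ ≤ 2 * Metric.infDist w ((affineSpan ℝ ({s • a + w, t • b + w} :
          Set (EuclideanSpace ℝ (Fin n)))) : Set (EuclideanSpace ℝ (Fin n))) / (s*t) := by
        gcongr

/-- A polygonal chain that is not contained in a line has a genuine corner. -/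
lemma exists_corner {n : ℕ} {N : ℕ} {v : ℕ → EuclideanSpace ℝ (Fin n)} (hN : 3 ≤ N)
    (hne : ∀ i, i + 1 < N → v i ≠ v (i + 1))
    (hcol : ¬ Collinear ℝ (⋃ i ∈ Finset.range (N - 1),
      segment ℝ (v i) (v (i + 1)))) :
    ∃ i, i + 2 < N ∧
      ¬ Collinear ℝ ({v i, v (i + 1), v (i + 2)} : Set (EuclideanSpace ℝ (Fin n))) := by
  by_contra hcon
  push_neg at hcon
  apply hcol
  have hv : ∀ k, k < N → v k ∈ line[ℝ, v 0, v 1] := by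
    intro k
    induction k using Nat.strong_induction_on with
    | _ k ih =>
      match k with
      | 0 => exact fun _ => left_mem_affineSpan_pair ℝ _ _
      | 1 => exact fun _ => right_mem_affineSpan_pair ℝ _ _
      | (m+2) =>
        intro hk
        have h1 : v m ∈ line[ℝ, v 0, v 1] := ih m (by omega) (by omega)
        have h2 : v (m+1) ∈ line[ℝ, v 0, v 1] := ih (m+1) (by omega) (by omega)
        have hc := hcon m hk
        have hmem : v (m+2) ∈ line[ℝ, v m, v (m+1)] :=
          hc.mem_affineSpan_of_mem_of_ne (Set.mem_insert _ _)
            (by simp) (by simp) (hne m (by omega))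
        exact affineSpan_pair_le_of_mem_of_mem h1 h2 hmem
  have hlin : Collinear ℝ ((line[ℝ, v 0, v 1] : AffineSubspace ℝ
      (EuclideanSpace ℝ (Fin n))) : Set (EuclideanSpace ℝ (Fin n))) := by
    rw [collinear_iff_of_mem (left_mem_affineSpan_pair ℝ (v 0) (v 1))]
    refine ⟨v 1 -ᵥ v 0, fun p hp => ?_⟩
    obtain ⟨r, hr⟩ := vadd_left_mem_affineSpan_pair.1
      (show (p -ᵥ v 0) +ᵥ v 0 ∈ _ by rwa [vsub_vadd])
    exact ⟨r, by rw [hr, vsub_vadd]⟩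
  refine hlin.subset ?_
  intro p hp
  simp only [Set.mem_iUnion] at hp
  obtain ⟨i, hi, hp⟩ := hp
  rw [Finset.mem_range] at hi
  exact (line[ℝ, v 0, v 1] : AffineSubspace ℝ (EuclideanSpace ℝ (Fin n))).convex.segment_subset
    (hv i (by omega)) (hv (i+1) (by omega)) hp

lemma measurableSet_image_line {n : ℕ} {a w : EuclideanSpace ℝ (Fin n)} (ha : ‖a‖ = 1)
    {A : Set ℝ} (hA : MeasurableSet A) :
    MeasurableSet ((fun s : ℝ => s • a + w) '' A) := by
  have hiso : Isometry (fun s : ℝ => s • a + w) := Isometry.of_dist_eq (fun s t => by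
    have h1 : s • a + w - (t • a + w) = (s - t) • a := by module
    rw [dist_eq_norm, h1, norm_smul, ha, Real.norm_eq_abs, Real.dist_eq, mul_one])
  exact (hiso.isClosedEmbedding.measurableEmbedding.measurableSet_image).2 hA

lemma mem_segment_line {n : ℕ} {w q : EuclideanSpace ℝ (Fin n)} (hq : q - w ≠ 0) {s : ℝ}
    (hs0 : 0 ≤ s) (hsl : s ≤ ‖q - w‖) :
    s • (‖q - w‖⁻¹ • (q - w)) + w ∈ segment ℝ q w := by
  have hl : 0 < ‖q - w‖ := norm_pos_iff.2 hq
  rw [segment_symm, segment_eq_image']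
  refine ⟨s / ‖q - w‖, ⟨by positivity, (div_le_one hl).2 hsl⟩, ?_⟩
  have h1 : (s / ‖q - w‖) • (q - w) = s • (‖q - w‖⁻¹ • (q - w)) := by
    rw [div_eq_mul_inv, mul_smul]
  simp only [h1]
  abel

set_option maxHeartbeats 1000000 in
/-- A simple polygon not contained in a straight line has infinite intermediate energy
for `p ≥ 2`. -/
theorem Ip_eq_top_of_isSimplePolygon {n : ℕ} (P : Set (EuclideanSpace ℝ (Fin n)))
    (hP : IsSimplePolygon P) (hcol : ¬ Collinear ℝ P) (p : ℝ) (hp : 2 ≤ p) :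
    Ip p P = ⊤ := by
  obtain ⟨N, v, hN, hne, hPeq, -, -⟩ := hP
  obtain ⟨i, hi2, hcor⟩ := exists_corner hN hne (by rw [hPeq] at hcol; exact hcol)
  set w : EuclideanSpace ℝ (Fin n) := v (i+1) with hwdef
  have hAw : v i ≠ w := hne i (by omega)
  have hBw : v (i+2) ≠ w := (hne (i+1) (by omega)).symm
  have hAw' : v i - w ≠ 0 := sub_ne_zero.2 hAw
  have hBw' : v (i+2) - w ≠ 0 := sub_ne_zero.2 hBw
  set la : ℝ := ‖v i - w‖ with hladef
  set lb : ℝ := ‖v (i+2) - w‖ with hlbdef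
  have hla : 0 < la := norm_pos_iff.2 hAw'
  have hlb : 0 < lb := norm_pos_iff.2 hBw'
  set a : EuclideanSpace ℝ (Fin n) := la⁻¹ • (v i - w) with hadef
  set b : EuclideanSpace ℝ (Fin n) := lb⁻¹ • (v (i+2) - w) with hbdef
  have ha : ‖a‖ = 1 := norm_smul_inv_norm hAw'
  have hb : ‖b‖ = 1 := norm_smul_inv_norm hBw'
  have hlaa : la • a = v i - w := by
    rw [hadef, smul_smul, mul_inv_cancel₀ hla.ne', one_smul]
  have hlbb : lb • b = v (i+2) - w := by
    rw [hbdef, smul_smul, mul_inv_cancel₀ hlb.ne', one_smul]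
  have hab : b ∉ Submodule.span ℝ {a} := by
    intro hmem
    obtain ⟨μ, hμ⟩ := Submodule.mem_span_singleton.1 hmem
    apply hcor
    have hc : (lb * μ * la⁻¹) • (v i -ᵥ w) +ᵥ w = v (i+2) := by
      rw [vsub_eq_sub, vadd_eq_add]
      have e1 : (lb * μ * la⁻¹) • (v i - w) = (lb * μ) • a := by
        rw [hadef, smul_smul]
      rw [e1, mul_smul, hμ, hlbb]
      abel
    have hBmem : v (i+2) ∈ line[ℝ, w, v i] := by
      rw [← hc]; exact smul_vsub_vadd_mem_affineSpan_pair _ _ _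
    have h3 : Collinear ℝ ({v (i+2), w, v i} : Set (EuclideanSpace ℝ (Fin n))) :=
      collinear_insert_of_mem_affineSpan_pair hBmem
    refine h3.subset ?_
    intro x hx
    simp only [Set.mem_insert_iff, Set.mem_singleton_iff] at hx ⊢
    tauto
  have hba : a ∉ Submodule.span ℝ {b} := by
    intro hmem
    obtain ⟨μ, hμ⟩ := Submodule.mem_span_singleton.1 hmem
    apply hcor
    have hc : (la * μ * lb⁻¹) • (v (i+2) -ᵥ w) +ᵥ w = v i := by
      rw [vsub_eq_sub, vadd_eq_add]
      have e1 : (la * μ * lb⁻¹) • (v (i+2) - w) = (la * μ) • b := by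
        rw [hbdef, smul_smul]
      rw [e1, mul_smul, hμ, hlaa]
      abel
    have hAmem : v i ∈ line[ℝ, w, v (i+2)] := by
      rw [← hc]; exact smul_vsub_vadd_mem_affineSpan_pair _ _ _
    have h3 : Collinear ℝ ({v i, w, v (i+2)} : Set (EuclideanSpace ℝ (Fin n))) :=
      collinear_insert_of_mem_affineSpan_pair hAmem
    exact h3.subset (by
      intro x hx
      simp only [Set.mem_insert_iff, Set.mem_singleton_iff] at hx ⊢
      tauto)
  obtain ⟨c₀, hc₀, hC⟩ := exists_transversality hab hba
  set δ : ℝ := min (min la lb) (c₀/2) with hδdef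
  have hδ : 0 < δ := lt_min (lt_min hla hlb) (by positivity)
  have hδla : δ ≤ la := le_trans (min_le_left _ _) (min_le_left _ _)
  have hδlb : δ ≤ lb := le_trans (min_le_left _ _) (min_le_right _ _)
  have hδc : 2 * δ ≤ c₀ := by
    have h := min_le_right (min la lb) (c₀/2)
    rw [← hδdef] at h
    linarith
  have hwP : w ∈ P := by
    rw [hPeq]
    exact Set.mem_iUnion₂.2 ⟨i, Finset.mem_range.2 (by omega),
      right_mem_segment ℝ (v i) (v (i+1))⟩
  have hSP : ∀ s ∈ Set.Ioc (0:ℝ) δ, s • a + w ∈ P := by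
    intro s hs
    rw [hPeq]
    refine Set.mem_iUnion₂.2 ⟨i, Finset.mem_range.2 (by omega), ?_⟩
    exact mem_segment_line hAw' hs.1.le (le_trans hs.2 hδla)
  have hTP : ∀ t ∈ Set.Ioc (0:ℝ) δ, t • b + w ∈ P := by
    intro t ht
    rw [hPeq]
    refine Set.mem_iUnion₂.2 ⟨i+1, Finset.mem_range.2 (by omega), ?_⟩
    have := mem_segment_line hBw' ht.1.le (le_trans ht.2 hδlb)
    rw [segment_symm] at this
    exact this
  have hdista : ∀ s : ℝ, dist (s • a + w) w = |s| := by
    intro s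
    have e : s • a + w - w = s • a := add_sub_cancel_right _ _
    rw [dist_eq_norm, e, norm_smul, ha, Real.norm_eq_abs, mul_one]
  have hdistb : ∀ t : ℝ, dist (t • b + w) w = |t| := by
    intro t
    have e : t • b + w - w = t • b := add_sub_cancel_right _ _
    rw [dist_eq_norm, e, norm_smul, hb, Real.norm_eq_abs, mul_one]
  set F : EuclideanSpace ℝ (Fin n) → ℝ≥0∞ := fun y =>
    ∫⁻ x in P, (⨆ z ∈ P, ENNReal.ofReal (menger x y z)) ^ p ∂μH[1] with hF
  have hSmeas : MeasurableSet ((fun s : ℝ => s • a + w) '' Set.Ioc 0 δ) :=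
    measurableSet_image_line ha measurableSet_Ioc
  have key : ∀ t ∈ Set.Ioc (0:ℝ) δ, ENNReal.ofReal (c₀^2/4 / t) ≤ F (t • b + w) := by
    intro t ht
    calc ENNReal.ofReal (c₀^2/4 / t)
        = ENNReal.ofReal (c₀^2/((2*t)^2)) * volume (Set.Ioc (0:ℝ) t) := by
          rw [Real.volume_Ioc, sub_zero, ← ENNReal.ofReal_mul (by positivity)]
          have e : c₀^2/((2*t)^2) * t = c₀^2/4 / t := by
            have ht0 : t ≠ 0 := ne_of_gt ht.1
            field_simp
            ring
          rw [e]
      _ = ∫⁻ _ in Set.Ioc (0:ℝ) t, ENNReal.ofReal (c₀^2/((2*t)^2)) :=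
          (setLIntegral_const _ _).symm
      _ ≤ ∫⁻ s in Set.Ioc (0:ℝ) t, ENNReal.ofReal (c₀^2/((|s| + t)^2)) := by
          refine setLIntegral_mono' measurableSet_Ioc fun s hs => ENNReal.ofReal_le_ofReal ?_
          have hsabs : |s| = s := abs_of_pos hs.1
          refine div_le_div_of_nonneg_left (by positivity)
            (by nlinarith [abs_nonneg s, ht.1]) ?_
          nlinarith [hs.2, hs.1]
      _ ≤ ∫⁻ s in Set.Ioc (0:ℝ) δ, ENNReal.ofReal (c₀^2/((|s| + t)^2)) :=
          lintegral_mono_set (Set.Ioc_subset_Ioc_right ht.2)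
      _ = ∫⁻ s in Set.Ioc (0:ℝ) δ, ENNReal.ofReal (c₀^2/((dist (s • a + w) w + t)^2)) := by
          refine setLIntegral_congr_fun measurableSet_Ioc
            (fun s _ => ?_)
          rw [hdista]
      _ = ∫⁻ x in (fun s : ℝ => s • a + w) '' Set.Ioc 0 δ,
            ENNReal.ofReal (c₀^2/((dist x w + t)^2)) ∂μH[1] :=
          (lintegral_image_line ha
            (fun x => ENNReal.ofReal (c₀^2/((dist x w + t)^2))) measurableSet_Ioc).symm
      _ ≤ ∫⁻ x in (fun s : ℝ => s • a + w) '' Set.Ioc 0 δ,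
            (⨆ z ∈ P, ENNReal.ofReal (menger x (t • b + w) z)) ^ p ∂μH[1] := by
          refine setLIntegral_mono' hSmeas ?_
          rintro x ⟨s, hs, rfl⟩
          have h1 : c₀/(s+t) ≤ menger (s • a + w) (t • b + w) w :=
            menger_corner hc₀ ha hb hC hs.1 ht.1
          have h2 : (1:ℝ) ≤ c₀/(s+t) := by
            rw [le_div_iff₀ (by have := hs.1; have := ht.1; linarith), one_mul]
            have h3 := hs.2
            have h4 := ht.2
            linarith
          have hpos : (0:ℝ) < c₀/(s+t) := div_pos hc₀ (by have := hs.1; have := ht.1; linarith)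
          calc ENNReal.ofReal (c₀^2/((dist (s • a + w) w + t)^2))
              = ENNReal.ofReal ((c₀/(s+t))^2) := by
                rw [hdista, abs_of_pos hs.1]
                congr 1
                rw [div_pow]
            _ = ENNReal.ofReal (c₀/(s+t)) ^ (2:ℝ) := by
                rw [ENNReal.ofReal_rpow_of_pos hpos]
                congr 1
                rw [show (2:ℝ) = ((2:ℕ):ℝ) by norm_num, Real.rpow_natCast]
            _ ≤ ENNReal.ofReal (c₀/(s+t)) ^ p :=
                ENNReal.rpow_le_rpow_of_exponent_le (ENNReal.one_le_ofReal.2 h2) hp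
            _ ≤ ENNReal.ofReal (menger (s • a + w) (t • b + w) w) ^ p :=
                ENNReal.rpow_le_rpow (ENNReal.ofReal_le_ofReal h1) (by linarith)
            _ ≤ (⨆ z ∈ P, ENNReal.ofReal (menger (s • a + w) (t • b + w) z)) ^ p :=
                ENNReal.rpow_le_rpow (le_biSup
                  (fun z => ENNReal.ofReal (menger (s • a + w) (t • b + w) z)) hwP) (by linarith)
      _ ≤ F (t • b + w) :=
          lintegral_mono_set (by rintro x ⟨s, hs, rfl⟩; exact hSP s hs)
  have hTmeas : MeasurableSet ((fun t : ℝ => t • b + w) '' Set.Ioc 0 δ) :=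
    measurableSet_image_line hb measurableSet_Ioc
  rw [← top_le_iff]
  calc (⊤:ℝ≥0∞) = ∫⁻ t in Set.Ioc (0:ℝ) δ, ENNReal.ofReal (c₀^2/4 / t) :=
        (lintegral_Ioc_div_eq_top (by positivity) hδ).symm
    _ = ∫⁻ t in Set.Ioc (0:ℝ) δ, ENNReal.ofReal (c₀^2/4 / dist (t • b + w) w) := by
        refine setLIntegral_congr_fun measurableSet_Ioc
          (fun t ht => ?_)
        rw [hdistb, abs_of_pos ht.1]
    _ = ∫⁻ y in (fun t : ℝ => t • b + w) '' Set.Ioc 0 δ,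
          ENNReal.ofReal (c₀^2/4 / dist y w) ∂μH[1] :=
        (lintegral_image_line hb
          (fun y => ENNReal.ofReal (c₀^2/4 / dist y w)) measurableSet_Ioc).symm
    _ ≤ ∫⁻ y in (fun t : ℝ => t • b + w) '' Set.Ioc 0 δ, F y ∂μH[1] := by
        refine setLIntegral_mono' hTmeas ?_
        rintro y ⟨t, ht, rfl⟩
        have h := key t ht
        rwa [hdistb, abs_of_pos ht.1]
    _ ≤ ∫⁻ y in P, F y ∂μH[1] :=
        lintegral_mono_set (by rintro y ⟨t, ht, rfl⟩; exact hTP t ht)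
    _ = Ip p P := rfl
end
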